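/- arXiv:1804.06643 — 7 statements merged into one kernel-verified Lean document; each statement's English description precedes it below -/
import Mathlib

section
/- If I is an m-primary ideal of R containing an element a with I² = aI and I = (a) :_R I, then setting A = I : I (the endomorphism ring in the total quotient ring), one has A = R : I and I = R : A; in particular R : (R : I) = I. -/
set_option synthInstance.maxHeartbeats 1000000
set_option maxHeartbeats 2000000
set_option linter.unnecessarySimpa false

open IsLocalRing Pointwise

section Defs
variable (R : Type*) [CommRing R]

/-- minimal number of generators of a submodule -/
noncomputable def mu {M : Type*} [AddCommGroup M] [Module R M] (N : Submodule R M) : ℕ :=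
  sInf {n | ∃ s : Finset M, s.card = n ∧ Submodule.span R (↑s : Set M) = N}

/-- length of a module, as the Krull dimension of its lattice of submodules -/
noncomputable def rlength (M : Type*) [AddCommGroup M] [Module R M] : WithBot ℕ∞ :=
  Order.krullDim (Submodule R M)

variable (K : Type*) [CommRing K] [Algebra R K]

/-- the image of an ideal in the total ring of fractions `K` -/
noncomputable def toK (I : Ideal R) : Submodule R K :=
  Submodule.map (Algebra.linearMap R K) I

/-- colon of submodules of the total quotient ring: `X : Y = {z | zY ⊆ X}` -/
def qcolon (X Y : Submodule R K) : Submodule R K where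
  carrier := {z | ∀ y ∈ Y, z * y ∈ X}
  add_mem' := by
    intro a b ha hb y hy
    simpa [add_mul] using X.add_mem (ha y hy) (hb y hy)
  zero_mem' := by
    intro y hy; simpa using X.zero_mem
  smul_mem' := by
    intro c a ha y hy
    simpa [smul_mul_assoc] using X.smul_mem c (ha y hy)

/-- `I : I`, viewed as a subalgebra (a birational extension of `R`) of the total
ring of fractions `K`. -/
noncomputable def endAlg (I : Ideal R) : Subalgebra R K where
  carrier := {z | ∀ y ∈ toK R K I, z * y ∈ toK R K I}
  mul_mem' := by
    intro a b ha hb y hy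
    rw [mul_assoc]; exact ha _ (hb y hy)
  add_mem' := by
    intro a b ha hb y hy
    simpa [add_mul] using (toK R K I).add_mem (ha y hy) (hb y hy)
  one_mem' := by intro y hy; simpa using hy
  zero_mem' := by intro y hy; simpa using (toK R K I).zero_mem
  algebraMap_mem' := by
    intro r y hy
    simpa [Algebra.smul_def] using (toK R K I).smul_mem r hy

/-- the socle `{x | m x = 0}` of a module over a local ring (`(⊥).jacobson` is
the maximal ideal of a local ring) -/
def socle (M : Type*) [AddCommGroup M] [Module R M] : Submodule R M where
  carrier := {x | ∀ c ∈ (⊥ : Ideal R).jacobson, c • x = 0}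
  add_mem' := by
    intro a b ha hb c hc; rw [smul_add, ha c hc, hb c hc, add_zero]
  zero_mem' := by intro c hc; simp
  smul_mem' := by
    intro r x hx c hc; rw [smul_comm, hx c hc, smul_zero]

/-- `R` has multiplicity `e`: the Hilbert function of the maximal ideal has
eventual first difference `e`.  (This is the multiplicity of a one-dimensional
Cohen-Macaulay local ring.) -/
noncomputable def HasMult (e : ℕ) : Prop :=
  ∀ᶠ n in Filter.atTop,
    rlength R (R ⧸ ((⊥ : Ideal R).jacobson ^ (n + 1))) =
      rlength R (R ⧸ ((⊥ : Ideal R).jacobson ^ n)) + (e : WithBot ℕ∞)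

/-- `R` has Cohen-Macaulay type `r`: for every parameter (a nonzerodivisor in
the maximal ideal), the socle of `R/(a)` has length `r`. -/
noncomputable def HasCMType (r : ℕ) : Prop :=
  ∀ a : R, a ∈ (⊥ : Ideal R).jacobson → a ∈ nonZeroDivisors R →
    rlength (R ⧸ Ideal.span {a}) (socle (R ⧸ Ideal.span {a}) (R ⧸ Ideal.span {a}))
      = (r : WithBot ℕ∞)

/-- an Artinian local ring is Gorenstein iff its socle is simple -/
noncomputable def IsArtinianGorensteinLocal : Prop :=
  IsArtinianRing R ∧ IsLocalRing R ∧ rlength R (socle R R) = (1 : WithBot ℕ∞)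

/-- a one-dimensional Cohen-Macaulay (Noetherian) local ring: local Noetherian
of Krull dimension one with positive depth -/
class IsOneDimCMLocal : Prop where
  noeth : IsNoetherianRing R
  local_ : IsLocalRing R
  dim_one : ringKrullDim R = 1
  depth_pos : ∃ a : R, a ∈ (⊥ : Ideal R).jacobson ∧ a ∈ nonZeroDivisors R

/-- Ulrich ideal: an `m`-primary ideal with a principal reduction `Q ⊊ I`,
`I² = QI`, and `I/I²` free over `R/I`. -/
def IsUlrich (I : Ideal R) : Prop :=
  I.radical = (⊥ : Ideal R).jacobson ∧ I ≠ ⊤ ∧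
  ∃ a ∈ I, Ideal.span {a} ≠ I ∧ I ^ 2 = Ideal.span {a} * I ∧
    Module.Free (R ⧸ I) I.Cotangent

/-- Condition (C) for an `m`-primary ideal `I`, with the number `t`:
`A/R ≅ (R/I)^t` with `t > 0` and `A = R : I`, where `A = I : I`. -/
def ConditionC (I : Ideal R) (t : ℕ) : Prop :=
  I.radical = (⊥ : Ideal R).jacobson ∧ I ≠ ⊤ ∧ 0 < t ∧
  Nonempty (((qcolon R K (toK R K I) (toK R K I)) ⧸
      (Submodule.comap (qcolon R K (toK R K I) (toK R K I)).subtype (toK R K (⊤ : Ideal R))))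
    ≃ₗ[R] (Fin t → R ⧸ I)) ∧
  qcolon R K (toK R K I) (toK R K I) = qcolon R K (toK R K (⊤ : Ideal R)) (toK R K I)

end Defs
theorem stmt0 (R : Type*) [CommRing R] [IsOneDimCMLocal R]
    (K : Type*) [CommRing K] [Algebra R K] [IsFractionRing R K]
    (I : Ideal R) (hIm : I.radical = (⊥ : Ideal R).jacobson) (hItop : I ≠ ⊤)
    (a : R) (ha : a ∈ I) (hred : I ^ 2 = Ideal.span {a} * I)
    (hcol : I = Submodule.colon (Ideal.span {a} : Ideal R) I) :
    qcolon R K (toK R K I) (toK R K I) = qcolon R K (toK R K (⊤ : Ideal R)) (toK R K I) ∧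
    toK R K I = qcolon R K (toK R K (⊤ : Ideal R)) (qcolon R K (toK R K I) (toK R K I)) ∧
    qcolon R K (toK R K (⊤ : Ideal R)) (qcolon R K (toK R K (⊤ : Ideal R)) (toK R K I)) = toK R K I := by
  classical
  set f := algebraMap R K with hf
  have hinj : Function.Injective f := IsFractionRing.injective R K
  have hmemK : ∀ {J : Ideal R} {z : K}, z ∈ toK R K J ↔ ∃ r ∈ J, f r = z := by
    intro J z
    simp [toK, Submodule.mem_map, Algebra.linearMap_apply, hf]
  have hmemQ : ∀ {X Y : Submodule R K} {z : K},
      z ∈ qcolon R K X Y ↔ ∀ y ∈ Y, z * y ∈ X := fun {X Y z} => Iff.rfl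
  -- a is a nonzerodivisor
  obtain ⟨b, hbm, hbnzd⟩ := IsOneDimCMLocal.depth_pos (R := R)
  have hanz : a ∈ nonZeroDivisors R := by
    rw [mem_nonZeroDivisors_iff_right]
    intro x hx
    have hb : b ∈ I.radical := hIm ▸ hbm
    obtain ⟨n, hn⟩ := hb
    have h2 : b ^ n * b ^ n ∈ I ^ 2 := by
      rw [sq]; exact Ideal.mul_mem_mul hn hn
    rw [hred] at h2
    have h3 : b ^ n * b ^ n ∈ Ideal.span {a} := Ideal.mul_le_left h2
    obtain ⟨c, hc⟩ := Ideal.mem_span_singleton'.mp h3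
    have hkill : x * (b ^ n * b ^ n) = 0 := by
      rw [← hc]
      calc x * (c * a) = c * (x * a) := by ring
        _ = 0 := by rw [hx, mul_zero]
    have hnz : b ^ n * b ^ n ∈ nonZeroDivisors R :=
      mul_mem (pow_mem hbnzd n) (pow_mem hbnzd n)
    exact (mem_nonZeroDivisors_iff_right.mp hnz) x hkill
  have hu : IsUnit (f a) := IsLocalization.map_units K (⟨a, hanz⟩ : nonZeroDivisors R)
  have hfa : f a ∈ toK R K I := hmemK.mpr ⟨a, ha, rfl⟩
  -- key: z ∈ A ↔ f a * z ∈ toK I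
  have key : ∀ z : K, z ∈ qcolon R K (toK R K I) (toK R K I) ↔ f a * z ∈ toK R K I := by
    intro z
    constructor
    · intro hz
      have := hmemQ.mp hz (f a) hfa
      rwa [mul_comm] at this
    · intro hz
      rw [hmemQ]
      intro y hy
      obtain ⟨r, hr, hrz⟩ := hmemK.mp hz
      obtain ⟨x, hx, hxy⟩ := hmemK.mp hy
      have hrx : r * x ∈ Ideal.span {a} * I := by
        rw [← hred, sq]; exact Ideal.mul_mem_mul hr hx
      obtain ⟨s, hs, hsa⟩ := Ideal.mem_span_singleton_mul.mp hrx
      have heq : f a * (z * y) = f a * f s := by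
        calc f a * (z * y) = (f a * z) * y := by ring
          _ = f r * f x := by rw [hrz, hxy]
          _ = f (r * x) := (map_mul f r x).symm
          _ = f (a * s) := by rw [hsa]
          _ = f a * f s := map_mul f a s
      have hzy : z * y = f s := hu.mul_left_cancel heq
      exact hmemK.mpr ⟨s, hs, hzy.symm⟩
  have hsub : toK R K I ≤ toK R K (⊤ : Ideal R) := Submodule.map_mono le_top
  -- Claim 1
  have c1 : qcolon R K (toK R K I) (toK R K I) = qcolon R K (toK R K (⊤ : Ideal R)) (toK R K I) := by
    ext z
    constructor
    · intro hz
      rw [hmemQ] at hz ⊢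
      intro y hy
      exact hsub (hz y hy)
    · intro hz
      rw [hmemQ] at hz
      rw [key]
      obtain ⟨r, -, hr⟩ := hmemK.mp (hz (f a) hfa)
      have hrI : r ∈ I := by
        rw [hcol, Submodule.mem_colon]
        intro p hp
        obtain ⟨s, -, hsw⟩ := hmemK.mp (hz (f p) (hmemK.mpr ⟨p, hp, rfl⟩))
        have heq : f (r * p) = f (a * s) := by
          rw [map_mul, map_mul, hr, mul_comm z (f a), mul_assoc, hsw]
        have h4 := hinj heq
        rw [smul_eq_mul, h4]
        exact Ideal.mem_span_singleton'.mpr ⟨s, mul_comm s a⟩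
      rw [mul_comm, ← hr]
      exact hmemK.mpr ⟨r, hrI, rfl⟩
  -- Claim 2
  have c2 : toK R K I = qcolon R K (toK R K (⊤ : Ideal R)) (qcolon R K (toK R K I) (toK R K I)) := by
    ext w
    constructor
    · intro hw
      rw [hmemQ]
      intro z hz
      rw [mul_comm]
      exact hsub (hmemQ.mp hz w hw)
    · intro hw
      rw [hmemQ] at hw
      have h1 : (1 : K) ∈ qcolon R K (toK R K I) (toK R K I) := by
        rw [hmemQ]; intro y hy; rwa [one_mul]
      obtain ⟨r, -, hr⟩ := hmemK.mp (by simpa using hw 1 h1)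
      have hrI : r ∈ I := by
        rw [hcol, Submodule.mem_colon]
        intro x hx
        have hfaz : f a * ((hu.unit⁻¹ : Kˣ) * f x) = f x := by
          rw [← mul_assoc, IsUnit.mul_val_inv, one_mul]
        have hz : ((hu.unit⁻¹ : Kˣ) * f x : K) ∈ qcolon R K (toK R K I) (toK R K I) := by
          rw [key, hfaz]
          exact hmemK.mpr ⟨x, hx, rfl⟩
        obtain ⟨s, -, hs⟩ := hmemK.mp (hw _ hz)
        have heq : f (r * x) = f (a * s) := by
          rw [map_mul, map_mul, hr, hs]
          calc w * f x = w * (f a * ((hu.unit⁻¹ : Kˣ) * f x)) := by rw [hfaz]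
            _ = f a * (w * ((hu.unit⁻¹ : Kˣ) * f x)) := by ring
        have h4 := hinj heq
        rw [smul_eq_mul, h4]
        exact Ideal.mem_span_singleton'.mpr ⟨s, mul_comm s a⟩
      rw [← hr]
      exact hmemK.mpr ⟨r, hrI, rfl⟩
  refine ⟨c1, c2, ?_⟩
  rw [← c1]
  exact c2.symm
end

section
/- If I is an Ulrich ideal of R, then I satisfies Condition (C): setting A = I : I, one has A/R ≅ (R/I)^⊕t as R-modules for t = μ_R(I) − 1 > 0, and A = R : I. -/
set_option synthInstance.maxHeartbeats 1000000
set_option maxHeartbeats 2000000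
set_option linter.unnecessarySimpa false

open IsLocalRing Pointwise

section AuxPiQuot
variable {S : Type*} [CommRing S] {t : ℕ} (c : Fin (t + 1) → S) (j : Fin (t + 1))

/-- the "eliminate coordinate j" map whose kernel is span {c}, when c j is a unit -/
noncomputable def elimMap (u : Sˣ) : (Fin (t + 1) → S) →ₗ[S] (Fin t → S) where
  toFun x := fun k => x (j.succAbove k) - c (j.succAbove k) * ((u⁻¹ : Sˣ) * x j)
  map_add' x y := by funext k; simp only [Pi.add_apply]; ring
  map_smul' r x := by funext k; simp only [Pi.smul_apply, smul_eq_mul, RingHom.id_apply]; ring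

theorem elimMap_surjective (u : Sˣ) : Function.Surjective (elimMap c j u) := by
  intro y
  refine ⟨Fin.insertNth j 0 y, ?_⟩
  funext k
  simp [elimMap, Fin.insertNth_apply_same, Fin.insertNth_apply_succAbove]

theorem elimMap_ker (u : Sˣ) (hu : (u : S) = c j) :
    LinearMap.ker (elimMap c j u) = Submodule.span S {c} := by
  apply le_antisymm
  · intro x hx
    have hx' : ∀ k, x (j.succAbove k) = c (j.succAbove k) * ((u⁻¹ : Sˣ) * x j) := by
      intro k
      have := congrFun (LinearMap.mem_ker.mp hx) k
      simpa [elimMap, sub_eq_zero] using this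
    rw [Submodule.mem_span_singleton]
    refine ⟨(u⁻¹ : Sˣ) * x j, ?_⟩
    funext i
    rcases eq_or_ne i j with rfl | hij
    · simp only [Pi.smul_apply, smul_eq_mul]
      rw [← hu, mul_comm, ← mul_assoc, Units.mul_inv, one_mul]
    · obtain ⟨k, rfl⟩ := Fin.exists_succAbove_eq hij
      simp only [Pi.smul_apply, smul_eq_mul]
      rw [hx' k]; ring
  · rw [Submodule.span_le, Set.singleton_subset_iff]
    simp only [SetLike.mem_coe, LinearMap.mem_ker]
    funext k
    show c (j.succAbove k) - c (j.succAbove k) * ((u⁻¹ : Sˣ) * c j) = (0 : S)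
    rw [← hu, mul_comm ((u⁻¹ : Sˣ) : S), Units.mul_inv, mul_one, sub_self]

end AuxPiQuot

section AuxQuotFree
variable {R S M : Type*} [CommRing R] [CommRing S] [Algebra R S]
    [AddCommGroup M] [Module S M] [Module R M] [IsScalarTower R S M]

theorem quot_free_equiv (hsur : Function.Surjective (algebraMap R S)) [IsLocalRing S]
    [Module.Finite S M] [Module.Free S M] {t : ℕ}
    (ht : Module.finrank S M = t + 1) (v : M)
    (hv : v ∉ (IsLocalRing.maximalIdeal S) • (⊤ : Submodule S M)) :
    Nonempty ((M ⧸ Submodule.span R {v}) ≃ₗ[R] (Fin t → S)) := by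
  let b : Module.Basis (Fin (t + 1)) S M := Module.finBasisOfFinrankEq S M ht
  let e : M ≃ₗ[S] (Fin (t + 1) → S) := b.equivFun
  set c : Fin (t + 1) → S := e v with hc
  have hvc : e.symm c = v := e.symm_apply_apply v
  obtain ⟨j, hj⟩ : ∃ j, IsUnit (c j) := by
    by_contra h
    push_neg at h
    apply hv
    have : v = ∑ i, c i • b i := by
      conv_lhs => rw [← hvc]
      rw [b.equivFun_symm_apply]
    rw [this]
    exact Submodule.sum_mem _ fun i _ =>
      Submodule.smul_mem_smul ((IsLocalRing.mem_maximalIdeal _).mpr (h i)) trivial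
  set u : Sˣ := hj.unit with hu'
  have hu : (u : S) = c j := hj.unit_spec
  set G : M →ₗ[S] (Fin t → S) := (elimMap c j u) ∘ₗ e.toLinearMap with hG
  have hGsurj : Function.Surjective G := by
    intro y
    obtain ⟨x, hx⟩ := elimMap_surjective c j u y
    exact ⟨e.symm x, by simp [hG, hx]⟩
  have hGker : LinearMap.ker G = Submodule.span S {v} := by
    rw [hG, LinearMap.ker_comp, elimMap_ker c j u hu, ← hvc]
    rw [Submodule.comap_equiv_eq_map_symm, Submodule.map_span, Set.image_singleton]; rfl
  set G' : M →ₗ[R] (Fin t → S) := G.restrictScalars R with hG'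
  have hG'surj : Function.Surjective G' := hGsurj
  have hG'ker : LinearMap.ker G' = Submodule.span R {v} := by
    rw [hG', LinearMap.ker_restrictScalars, hGker, Submodule.restrictScalars_span R S hsur]
  exact ⟨(Submodule.quotEquivOfEq _ _ hG'ker.symm).trans
    (G'.quotKerEquivOfSurjective hG'surj)⟩

end AuxQuotFree
section AuxCot
open IsLocalRing
variable {R : Type*} [CommRing R] [IsLocalRing R] [IsNoetherianRing R] {I : Ideal R}

theorem cot_not_mem_smul_top {a d : R} (haI : a ∈ I)
    (hsq : I ^ 2 = Ideal.span {a} * I) (hdI : d ∈ I) (hdnzd : d ∈ nonZeroDivisors R)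
    (hItop : I ≠ ⊤) [IsLocalRing (R ⧸ I)] :
    I.toCotangent ⟨a, haI⟩ ∉
      (maximalIdeal (R ⧸ I)) • (⊤ : Submodule (R ⧸ I) I.Cotangent) := by
  intro hmem
  have hIm : I ≤ maximalIdeal R := le_maximalIdeal hItop
  -- step 1: pass to the R-module smul
  have h1 : I.toCotangent ⟨a, haI⟩ ∈
      (maximalIdeal R) • (⊤ : Submodule R I.Cotangent) := by
    refine Submodule.smul_induction_on hmem ?_ ?_
    · intro s hs z _
      obtain ⟨r, rfl⟩ := Ideal.Quotient.mk_surjective s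
      have hr : r ∈ maximalIdeal R := by
        rw [mem_maximalIdeal, mem_nonunits_iff]
        intro hru
        exact mem_nonunits_iff.mp ((mem_maximalIdeal _).mp hs) (hru.map (Ideal.Quotient.mk I))
      have : (Ideal.Quotient.mk I r) • z = r • z := rfl
      rw [this]
      exact Submodule.smul_mem_smul hr trivial
    · intro x y hx hy
      exact Submodule.add_mem _ hx hy
  -- step 2: a ∈ m * I
  have h2 : a ∈ (maximalIdeal R) * I := by
    have hmap : (maximalIdeal R) • (⊤ : Submodule R I.Cotangent) =
        Submodule.map I.toCotangent ((maximalIdeal R) • (⊤ : Submodule R I)) := by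
      rw [Submodule.map_smul'', Submodule.map_top, Ideal.toCotangent_range]
    rw [hmap] at h1
    obtain ⟨y, hy, hya⟩ := h1
    have hyI : (y : R) ∈ (maximalIdeal R) * I := by
      have : Submodule.map I.subtype ((maximalIdeal R) • (⊤ : Submodule R I)) =
          (maximalIdeal R) • (I : Submodule R R) := by
        rw [Submodule.map_smul'', Submodule.map_subtype_top]
      have hmem2 : (y : R) ∈ Submodule.map I.subtype ((maximalIdeal R) • ⊤) :=
        ⟨y, hy, rfl⟩
      rw [this, Ideal.smul_eq_mul] at hmem2
      exact hmem2
    have hsub : (a - (y : R)) ∈ I ^ 2 := by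
      have := (Ideal.toCotangent_eq I).mp hya.symm
      simpa using this
    have hI2m : I ^ 2 ≤ (maximalIdeal R) * I := by
      rw [pow_two]; exact Ideal.mul_mono hIm le_rfl
    have := Ideal.add_mem _ hyI (hI2m hsub)
    simpa using this
  -- step 3: Nakayama gives I^2 = ⊥, contradicting d nonzerodivisor
  have h3 : (I ^ 2 : Ideal R) ≤ (maximalIdeal R) • (I ^ 2 : Ideal R) := by
    calc (I ^ 2 : Ideal R) = Ideal.span {a} * I := hsq
    _ ≤ ((maximalIdeal R) * I) * I := by
        refine Ideal.mul_mono ?_ le_rfl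
        rw [Ideal.span_le, Set.singleton_subset_iff]; exact h2
    _ = (maximalIdeal R) * (I * I) := by rw [mul_assoc]
    _ = (maximalIdeal R) • (I ^ 2 : Ideal R) := by rw [Ideal.smul_eq_mul, pow_two]
  have hbot : (I ^ 2 : Ideal R) = ⊥ :=
    Submodule.eq_bot_of_le_smul_of_le_jacobson_bot (maximalIdeal R) _
      (IsNoetherian.noetherian _) h3
      (le_of_eq (IsLocalRing.jacobson_eq_maximalIdeal ⊥ bot_ne_top).symm)
  have hd2 : d * d ∈ (I ^ 2 : Ideal R) := by rw [pow_two]; exact Ideal.mul_mem_mul hdI hdI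
  rw [hbot, Ideal.mem_bot] at hd2
  have : d * d ∈ nonZeroDivisors R := mul_mem hdnzd hdnzd
  exact nonZeroDivisors.ne_zero this hd2

end AuxCot
section AuxMu
open IsLocalRing
variable {R : Type*} [CommRing R] [IsLocalRing R] [IsNoetherianRing R] {I : Ideal R}

theorem quotN_exists {a : R} (haI : a ∈ I) (hI2 : I ^ 2 ≤ Ideal.span {a}) :
    ∃ Θ : (↥I) →ₗ[R] (I.Cotangent ⧸ Submodule.span R {I.toCotangent ⟨a, haI⟩}),
      Function.Surjective Θ ∧
      LinearMap.ker Θ = Submodule.comap I.subtype (Ideal.span {a}) := by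
  refine ⟨(Submodule.span R {I.toCotangent ⟨a, haI⟩}).mkQ ∘ₗ I.toCotangent, ?_, ?_⟩
  · exact (Submodule.mkQ_surjective _).comp I.toCotangent_surjective
  · ext x
    simp only [LinearMap.mem_ker, LinearMap.comp_apply, Submodule.mkQ_apply,
      Submodule.Quotient.mk_eq_zero, Submodule.mem_comap, Submodule.coe_subtype]
    rw [Submodule.mem_span_singleton]
    constructor
    · rintro ⟨r, hr⟩
      have : r • I.toCotangent ⟨a, haI⟩ = I.toCotangent (r • ⟨a, haI⟩) := (map_smul _ _ _).symm
      rw [this] at hr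
      have hsub := (Ideal.toCotangent_eq I).mp hr.symm
      have hxa : (x : R) - r * a ∈ Ideal.span {a} := by
        apply hI2
        simpa using hsub
      have : (x : R) = ((x : R) - r * a) + r * a := by ring
      rw [this]
      exact Ideal.add_mem _ hxa (Ideal.mul_mem_left _ r (Ideal.mem_span_singleton_self a))
    · intro hx
      obtain ⟨r, hr⟩ := Ideal.mem_span_singleton'.mp hx
      refine ⟨r, ?_⟩
      have : r • I.toCotangent ⟨a, haI⟩ = I.toCotangent (r • ⟨a, haI⟩) := (map_smul _ _ _).symm
      rw [this]
      congr 1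
      ext
      simpa using hr
end AuxMu

section AuxMu2
open IsLocalRing
variable {R : Type*} [CommRing R] [IsLocalRing R] [IsNoetherianRing R] {I : Ideal R}

theorem mu_eq_finrank (hItop : I ≠ ⊤)
    [Module.Finite (R ⧸ I) I.Cotangent] [Module.Free (R ⧸ I) I.Cotangent] :
    mu R I = Module.finrank (R ⧸ I) I.Cotangent := by
  classical
  haveI : Nontrivial (R ⧸ I) := Ideal.Quotient.nontrivial_iff.mpr hItop
  set S := R ⧸ I with hS
  set n := Module.finrank S I.Cotangent with hn
  have hIm : I ≤ maximalIdeal R := le_maximalIdeal hItop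
  have hjac : maximalIdeal R ≤ (⊥ : Ideal R).jacobson :=
    le_of_eq (IsLocalRing.jacobson_eq_maximalIdeal ⊥ bot_ne_top).symm
  apply le_antisymm
  · -- mu ≤ n : lift a basis
    let b : Module.Basis (Fin n) S I.Cotangent := Module.finBasis S I.Cotangent
    choose x hx using fun i => I.toCotangent_surjective (b i)
    have hinj : Function.Injective fun i => ((x i : R)) := by
      intro i i' h
      have : x i = x i' := Subtype.ext h
      have hb : b i = b i' := by rw [← hx i, ← hx i', this]
      exact b.injective hb
    set s : Finset R := Finset.univ.image fun i => ((x i : R)) with hs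
    have hcard : s.card = n := by
      rw [hs, Finset.card_image_of_injective _ hinj, Finset.card_univ, Fintype.card_fin]
    have hle1 : Submodule.span R (s : Set R) ≤ I := by
      rw [Submodule.span_le]
      intro y hy
      simp only [hs, Finset.coe_image, Set.mem_image] at hy
      obtain ⟨i, _, rfl⟩ := hy
      exact (x i).2
    have hle2 : (I : Submodule R R) ≤ Submodule.span R (s : Set R) ⊔ I • (I : Submodule R R) := by
      intro y hy
      set z := I.toCotangent ⟨y, hy⟩ with hz
      choose r hr using fun i => Ideal.Quotient.mk_surjective (R := R) (I := I) (b.repr z i)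
      set q : ↥I := ∑ i, r i • x i with hq
      have hqz : I.toCotangent q = z := by
        rw [hq, map_sum]
        have : ∀ i, I.toCotangent (r i • x i) = b.repr z i • b i := by
          intro i
          rw [map_smul, hx i, ← hr i]
          rfl
        rw [Finset.sum_congr rfl fun i _ => this i]
        exact b.sum_repr z
      have hyq : y - (q : R) ∈ I • (I : Submodule R R) := by
        rw [Ideal.smul_eq_mul, ← pow_two]
        have : I.toCotangent (⟨y, hy⟩ - q) = 0 := by
          rw [map_sub, hqz, hz, sub_self]
        have := (Ideal.toCotangent_eq_zero I _).mp this
        simpa using this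
      have hqs : (q : R) ∈ Submodule.span R (s : Set R) := by
        rw [hq]
        have : ((∑ i, r i • x i : ↥I) : R) = ∑ i, r i • ((x i : R)) := by
          simp
        rw [this]
        refine Submodule.sum_mem _ fun i _ => Submodule.smul_mem _ _ ?_
        apply Submodule.subset_span
        simp [hs]
      have : y = (q : R) + (y - (q : R)) := by ring
      rw [this]
      exact Submodule.add_mem_sup hqs hyq
    have hspan : Submodule.span R (s : Set R) = I :=
      le_antisymm hle1
        (Submodule.le_of_le_smul_of_le_jacobson_bot (IsNoetherian.noetherian _)
          (le_trans hIm hjac) hle2)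
    exact Nat.sInf_le ⟨s, hcard, hspan⟩
  · -- n ≤ mu
    apply le_csInf
    · -- the set is nonempty: I is f.g.
      obtain ⟨s, hs⟩ := (IsNoetherian.noetherian I)
      exact ⟨s.card, s, rfl, hs⟩
    · rintro k ⟨s, hcard, hspan⟩
      have hsI : ∀ y ∈ s, y ∈ I := fun y hy => hspan ▸ Submodule.subset_span hy
      set v : {y // y ∈ s} → I.Cotangent := fun y => I.toCotangent ⟨y.1, hsI y.1 y.2⟩ with hv
      have hT : Submodule.span R (Set.range v) = ⊤ := by
        -- span of the lifts is ⊤ in I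
        have hstep1 : Submodule.span R {x : ↥I | (x : R) ∈ (s : Set R)} = ⊤ := by
          apply Submodule.map_injective_of_injective I.injective_subtype
          rw [Submodule.map_span, Submodule.map_subtype_top]
          have himg : I.subtype '' {x : ↥I | (x : R) ∈ (s : Set R)} = (s : Set R) := by
            ext y
            constructor
            · rintro ⟨x, hx, rfl⟩; exact hx
            · intro hy; exact ⟨⟨y, hsI y hy⟩, hy, rfl⟩
          rw [himg, hspan]
        have hstep2 : Submodule.span R (Set.range v) =
            Submodule.map I.toCotangent (Submodule.span R {x : ↥I | (x : R) ∈ (s : Set R)}) := by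
          rw [Submodule.map_span]
          congr 1
          ext z
          constructor
          · rintro ⟨y, rfl⟩
            exact ⟨⟨y.1, hsI y.1 y.2⟩, y.2, rfl⟩
          · rintro ⟨x, hx, rfl⟩
            exact ⟨⟨(x : R), hx⟩, rfl⟩
        rw [hstep2, hstep1, Submodule.map_top, Ideal.toCotangent_range]
      have hTS : Submodule.span S (Set.range v) = ⊤ := by
        rw [eq_top_iff]
        intro z _
        have : z ∈ Submodule.span R (Set.range v) := hT ▸ trivial
        exact Submodule.span_le_restrictScalars R S _ this
      have := finrank_le_of_span_eq_top hTS
      rwa [Fintype.card_coe, hcard] at this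
end AuxMu2
theorem stmt1 (R : Type*) [CommRing R] [IsOneDimCMLocal R]
    (K : Type*) [CommRing K] [Algebra R K] [IsFractionRing R K]
    (I : Ideal R) (hI : IsUlrich R I) :
    ConditionC R K I (mu R I - 1) := by
  classical
  obtain ⟨hrad, hItop, a, haI, haneq, hsq, hfree⟩ := hI
  haveI : IsLocalRing R := IsOneDimCMLocal.local_
  haveI : IsNoetherianRing R := IsOneDimCMLocal.noeth
  have hjac : (⊥ : Ideal R).jacobson = maximalIdeal R :=
    IsLocalRing.jacobson_eq_maximalIdeal ⊥ bot_ne_top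
  have hIm : I ≤ maximalIdeal R := le_maximalIdeal hItop
  -- a nonzerodivisor d ∈ I
  obtain ⟨c, hc1, hc2⟩ := IsOneDimCMLocal.depth_pos (R := R)
  have hcrad : c ∈ I.radical := by rw [hrad, hjac]; exact hjac ▸ hc1
  obtain ⟨m, hm⟩ := Ideal.mem_radical_iff.mp hcrad
  have hdI : c ^ m ∈ I := hm
  have hdnzd : c ^ m ∈ nonZeroDivisors R := pow_mem hc2 m
  set d := c ^ m with hd
  have hI2a : I ^ 2 ≤ Ideal.span {a} := by
    rw [hsq]; exact Ideal.mul_le_left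
  -- a is a nonzerodivisor
  have hanzd : a ∈ nonZeroDivisors R := by
    have hd2 : d * d ∈ Ideal.span {a} := hI2a (by rw [pow_two]; exact Ideal.mul_mem_mul hdI hdI)
    obtain ⟨r, hr⟩ := Ideal.mem_span_singleton'.mp hd2
    refine mem_nonZeroDivisors_iff_right.mpr ?_
    intro z hz
    have h1 : z * d * d = 0 := by
      rw [mul_assoc, ← hr, ← mul_assoc, mul_comm z r, mul_assoc, hz, mul_zero]
    exact (mem_nonZeroDivisors_iff_right.mp hdnzd) z ((mem_nonZeroDivisors_iff_right.mp hdnzd) (z * d) h1)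
  -- fraction field facts
  have inj : Function.Injective (algebraMap R K) := IsFractionRing.injective R K
  obtain ⟨u, hu⟩ : IsUnit (algebraMap R K a) := IsLocalization.map_units K ⟨a, hanzd⟩
  have mem_toK : ∀ (J : Ideal R) (x : K), x ∈ toK R K J ↔ ∃ r ∈ J, algebraMap R K r = x := by
    intro J x
    simp [toK, Submodule.mem_map, Algebra.linearMap_apply]
  -- membership criterion for A = I : I
  have memA_of : ∀ (z : K) (i : R), i ∈ I → z * algebraMap R K a = algebraMap R K i →
      z ∈ qcolon R K (toK R K I) (toK R K I) := by
    intro z i hiI hzi y hy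
    obtain ⟨w, hwI, rfl⟩ := (mem_toK I y).mp hy
    have hiw : i * w ∈ Ideal.span {a} * I := by
      rw [← hsq, pow_two]; exact Ideal.mul_mem_mul hiI hwI
    obtain ⟨v, hvI, hv⟩ := Ideal.mem_span_singleton_mul.mp hiw
    refine (mem_toK I _).mpr ⟨v, hvI, ?_⟩
    have hcancel : algebraMap R K v * algebraMap R K a =
        (z * algebraMap R K w) * algebraMap R K a := by
      rw [← map_mul, mul_comm v a, hv, map_mul, ← hzi]; ring
    rw [← hu] at hcancel
    exact (Units.mul_left_inj u).mp hcancel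
  set A := qcolon R K (toK R K I) (toK R K I) with hA
  set RA := Submodule.comap A.subtype (toK R K (⊤ : Ideal R)) with hRA
  have hmemA : ∀ x : ↥I, ((u⁻¹ : Kˣ) : K) * algebraMap R K (x : R) ∈ A := by
    intro x
    apply memA_of _ (x : R) x.2
    rw [← hu, mul_comm ((u⁻¹ : Kˣ) : K), mul_assoc, Units.inv_mul, mul_one]
  set θ₀ : ↥I →ₗ[R] K :=
    { toFun := fun x => ((u⁻¹ : Kˣ) : K) * algebraMap R K (x : R)
      map_add' := by intro x y; simp [mul_add]
      map_smul' := by intro r x; simp [Algebra.smul_def]; ring } with hθ₀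
  set θ : ↥I →ₗ[R] (A ⧸ RA) := RA.mkQ ∘ₗ (θ₀.codRestrict A hmemA) with hθ
  have hθsurj : Function.Surjective θ := by
    intro zbar
    obtain ⟨z, rfl⟩ := Submodule.mkQ_surjective RA zbar
    have hz : (z : K) * algebraMap R K a ∈ toK R K I := by
      have := z.2 (algebraMap R K a) ((mem_toK I _).mpr ⟨a, haI, rfl⟩)
      exact this
    obtain ⟨i, hiI, hi⟩ := (mem_toK I _).mp hz
    refine ⟨⟨i, hiI⟩, ?_⟩
    rw [hθ]
    simp only [LinearMap.comp_apply, Submodule.mkQ_apply]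
    congr 1
    ext
    simp only [LinearMap.codRestrict_apply, hθ₀, LinearMap.coe_mk, AddHom.coe_mk]
    rw [hi, ← hu]
    calc ((u⁻¹ : Kˣ) : K) * ((z : K) * (u : K)) = (z : K) * ((u : K) * ((u⁻¹ : Kˣ) : K)) := by ring
    _ = (z : K) := by rw [Units.mul_inv, mul_one]
  set N : Submodule R ↥I := Submodule.comap I.subtype (Ideal.span {a}) with hN
  have hθker : LinearMap.ker θ = N := by
    ext x
    rw [hθ, LinearMap.ker_comp, Submodule.ker_mkQ, Submodule.mem_comap]
    have hval : (θ₀.codRestrict A hmemA x : K) = ((u⁻¹ : Kˣ) : K) * algebraMap R K (x : R) := rfl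
    rw [hRA]
    simp only [Submodule.mem_comap, Submodule.coe_subtype, hval]
    rw [mem_toK]
    constructor
    · rintro ⟨r, -, hr⟩
      have : algebraMap R K (x : R) = algebraMap R K (r * a) := by
        rw [map_mul, ← hu, hr, mul_comm ((u⁻¹ : Kˣ) : K) (algebraMap R K (x : R)), mul_assoc,
          Units.inv_mul, mul_one]
      have hxa : (x : R) = r * a := inj this
      rw [hN, Submodule.mem_comap]
      exact Ideal.mem_span_singleton'.mpr ⟨r, hxa.symm⟩
    · intro hx
      rw [hN, Submodule.mem_comap] at hx
      obtain ⟨r, hr⟩ := Ideal.mem_span_singleton'.mp hx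
      have hr' : r * a = (x : R) := hr
      refine ⟨r, trivial, ?_⟩
      rw [← hr', map_mul, ← hu]
      calc algebraMap R K r = algebraMap R K r * (((u⁻¹ : Kˣ) : K) * (u : K)) := by
            rw [Units.inv_mul, mul_one]
      _ = ((u⁻¹ : Kˣ) : K) * (algebraMap R K r * (u : K)) := by ring
  -- the cotangent side
  haveI : Nontrivial (R ⧸ I) := Ideal.Quotient.nontrivial_iff.mpr hItop
  haveI : IsLocalRing (R ⧸ I) := IsLocalRing.of_surjective' _ Ideal.Quotient.mk_surjective
  haveI : Module.Finite R ↥I := Module.Finite.iff_fg.mpr (IsNoetherian.noetherian I)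
  haveI : Module.Finite R I.Cotangent :=
    Module.Finite.of_surjective I.toCotangent I.toCotangent_surjective
  haveI : Module.Finite (R ⧸ I) I.Cotangent := Module.Finite.of_restrictScalars_finite R _ _
  haveI : Module.Free (R ⧸ I) I.Cotangent := hfree
  have hv : I.toCotangent ⟨a, haI⟩ ∉
      (maximalIdeal (R ⧸ I)) • (⊤ : Submodule (R ⧸ I) I.Cotangent) :=
    cot_not_mem_smul_top haI hsq hdI hdnzd hItop
  have hpos : 1 ≤ Module.finrank (R ⧸ I) I.Cotangent := by
    by_contra h
    push_neg at h
    have h0 : Module.finrank (R ⧸ I) I.Cotangent = 0 := by omega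
    let b : Module.Basis (Fin 0) (R ⧸ I) I.Cotangent := Module.finBasisOfFinrankEq _ _ h0
    haveI : Subsingleton (Fin 0 →₀ (R ⧸ I)) :=
      ⟨fun f g => Finsupp.ext fun i => Fin.elim0 i⟩
    haveI : Subsingleton I.Cotangent := b.repr.toEquiv.subsingleton
    exact hv (by rw [Subsingleton.elim (I.toCotangent ⟨a, haI⟩) 0]; exact Submodule.zero_mem _)
  set t : ℕ := Module.finrank (R ⧸ I) I.Cotangent - 1 with htdef
  have ht : Module.finrank (R ⧸ I) I.Cotangent = t + 1 := by omega
  have hsurq : Function.Surjective (algebraMap R (R ⧸ I)) := by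
    rw [Ideal.Quotient.algebraMap_eq]
    exact Ideal.Quotient.mk_surjective
  obtain ⟨E3⟩ := quot_free_equiv hsurq ht (I.toCotangent ⟨a, haI⟩) hv
  obtain ⟨Θ, hΘsurj, hΘker⟩ := quotN_exists haI hI2a
  -- the chain of equivalences
  set E2 : (↥I ⧸ N) ≃ₗ[R]
      (I.Cotangent ⧸ Submodule.span R {I.toCotangent ⟨a, haI⟩}) :=
    (Submodule.quotEquivOfEq N (LinearMap.ker Θ) hΘker.symm).trans
      (Θ.quotKerEquivOfSurjective hΘsurj) with hE2
  set E1 : (↥I ⧸ N) ≃ₗ[R] (A ⧸ RA) :=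
    (Submodule.quotEquivOfEq N (LinearMap.ker θ) hθker.symm).trans
      (θ.quotKerEquivOfSurjective hθsurj) with hE1
  set e : (↥I ⧸ N) ≃ₗ[R] (Fin t → R ⧸ I) := E2.trans E3 with he
  -- t is positive
  have ht1 : 0 < t := by
    rcases Nat.eq_zero_or_pos t with h0 | h
    · exfalso
      haveI : Subsingleton (Fin t → R ⧸ I) := by
        rw [h0]; infer_instance
      haveI : Subsingleton (↥I ⧸ N) := e.toEquiv.subsingleton
      apply haneq
      apply le_antisymm
      · rw [Ideal.span_le, Set.singleton_subset_iff]; exact haI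
      · intro y hy
        have : Submodule.Quotient.mk (⟨y, hy⟩ : ↥I) = (0 : ↥I ⧸ N) := Subsingleton.elim _ _
        have hmem := (Submodule.Quotient.mk_eq_zero N).mp this
        rw [hN, Submodule.mem_comap] at hmem
        exact hmem
    · exact h
  -- annihilator argument
  have hann : ∀ r : R, (∀ x ∈ I, r * x ∈ Ideal.span {a}) → r ∈ I := by
    intro r hr
    have hkill : ∀ z : (↥I ⧸ N), r • z = 0 := by
      intro z
      obtain ⟨y, rfl⟩ := Submodule.mkQ_surjective N z
      have : r • (Submodule.mkQ N y) = Submodule.mkQ N (r • y) := (map_smul _ _ _).symm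
      rw [this, Submodule.mkQ_apply, Submodule.Quotient.mk_eq_zero, hN, Submodule.mem_comap]
      exact hr (y : R) y.2
    have h1 : (fun _ => (1 : R ⧸ I)) = e (e.symm fun _ => (1 : R ⧸ I)) := (e.apply_symm_apply _).symm
    have h2 : r • (fun _ => (1 : R ⧸ I)) = (0 : Fin t → R ⧸ I) := by
      rw [h1, ← map_smul, hkill, map_zero]
    have h3 := congrFun h2 ⟨0, ht1⟩
    have h4 : r • (1 : R ⧸ I) = 0 := h3
    rw [Algebra.smul_def, mul_one, Ideal.Quotient.algebraMap_eq] at h4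
    exact Ideal.Quotient.eq_zero_iff_mem.mp h4
  -- A = R : I
  have hAeq : A = qcolon R K (toK R K (⊤ : Ideal R)) (toK R K I) := by
    ext z
    constructor
    · intro hz y hy
      have : z * y ∈ toK R K I := hz y hy
      obtain ⟨w, hwI, hw⟩ := (mem_toK I _).mp this
      exact (mem_toK ⊤ _).mpr ⟨w, trivial, hw⟩
    · intro hz
      have hza : z * algebraMap R K a ∈ toK R K (⊤ : Ideal R) :=
        hz (algebraMap R K a) ((mem_toK I _).mpr ⟨a, haI, rfl⟩)
      obtain ⟨r, -, hr⟩ := (mem_toK ⊤ _).mp hza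
      have hrI : r ∈ I := by
        apply hann
        intro x hxI
        have hzx : z * algebraMap R K x ∈ toK R K (⊤ : Ideal R) :=
          hz (algebraMap R K x) ((mem_toK I _).mpr ⟨x, hxI, rfl⟩)
        obtain ⟨w, -, hw⟩ := (mem_toK ⊤ _).mp hzx
        have : algebraMap R K (r * x) = algebraMap R K (w * a) := by
          rw [map_mul, map_mul, hr, hw]
          ring
        have := inj this
        rw [this]
        exact Ideal.mem_span_singleton'.mpr ⟨w, rfl⟩
      exact memA_of z r hrI hr.symm
  -- the count: mu R I = t + 1
  have hmu : mu R I = t + 1 := by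
    rw [mu_eq_finrank hItop, ht]
  have hmt : mu R I - 1 = t := by omega
  rw [hmt]
  exact ⟨hrad, hItop, ht1, ⟨E1.symm.trans e⟩, hAeq⟩
end

section
/- Let I be an m-primary ideal of R satisfying Condition (C) with A = I : I. Then for every a ∈ R, aA ∩ R ⊆ (a) + I. -/
set_option synthInstance.maxHeartbeats 1000000
set_option maxHeartbeats 2000000
set_option linter.unnecessarySimpa false

open IsLocalRing Pointwise

theorem stmt2 (R : Type*) [CommRing R] [IsOneDimCMLocal R]
    (K : Type*) [CommRing K] [Algebra R K] [IsFractionRing R K]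
    (I : Ideal R) (t : ℕ) (hC : ConditionC R K I t) (a : R) :
    (a • qcolon R K (toK R K I) (toK R K I)) ⊓ toK R K (⊤ : Ideal R) ≤
      toK R K (Ideal.span {a} ⊔ I) := by
  classical
  obtain ⟨-, -, -, ⟨e⟩, -⟩ := hC
  intro x hx
  obtain ⟨hx1, hx2⟩ := hx
  obtain ⟨α, hα, rfl⟩ := hx1
  set A := qcolon R K (toK R K I) (toK R K I) with hA
  set Rsub := Submodule.comap A.subtype (toK R K (⊤ : Ideal R)) with hRsub
  set q : A ⧸ Rsub := Submodule.Quotient.mk ⟨α, hα⟩ with hq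
  have haq : a • q = 0 := by
    rw [hq, ← Submodule.Quotient.mk_smul, Submodule.Quotient.mk_eq_zero]
    simpa [hRsub] using hx2
  set J := I.colon (Ideal.span {a}) with hJ
  have hqmem : q ∈ J • (⊤ : Submodule R (A ⧸ Rsub)) := by
    have hav : a • e q = 0 := by rw [← map_smul, haq, map_zero]
    have hcomp : ∀ i, ∃ c : R, Ideal.Quotient.mk I c = e q i ∧ a * c ∈ I := by
      intro i
      obtain ⟨c, hc⟩ := Ideal.Quotient.mk_surjective (e q i)
      refine ⟨c, hc, ?_⟩
      have h2 := congrFun hav i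
      rw [Pi.smul_apply, ← hc] at h2
      have h3 : Ideal.Quotient.mk I (a * c) = 0 := by
        rw [map_mul, ← Ideal.Quotient.algebraMap_eq, ← Algebra.smul_def]
        simpa using h2
      rwa [Ideal.Quotient.eq_zero_iff_mem] at h3
    choose c hc1 hc2 using hcomp
    have hv : e q ∈ J • (⊤ : Submodule R (Fin t → R ⧸ I)) := by
      have hvsum : e q = ∑ i, (c i) • (Pi.single i (1 : R ⧸ I) : Fin t → R ⧸ I) := by
        rw [← Finset.univ_sum_single (e q)]
        refine Finset.sum_congr rfl fun i _ => ?_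
        rw [← hc1 i, ← Pi.single_smul]
        rw [← Ideal.Quotient.algebraMap_eq, Algebra.algebraMap_eq_smul_one]
      rw [hvsum]
      refine Submodule.sum_mem _ fun i _ => Submodule.smul_mem_smul ?_ trivial
      rw [hJ, Ideal.mem_colon_span_singleton, mul_comm]
      exact hc2 i
    have hmap : Submodule.map (e : (A ⧸ Rsub) →ₗ[R] (Fin t → R ⧸ I))
        (J • (⊤ : Submodule R (A ⧸ Rsub))) = J • ⊤ := by
      rw [Submodule.map_smul'', Submodule.map_top, LinearEquiv.range]
    rw [← hmap] at hv
    obtain ⟨q', hq', heq⟩ := hv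
    rwa [show q' = q from e.injective heq] at hq'
  have hlift : Submodule.map Rsub.mkQ (J • (⊤ : Submodule R A)) = J • ⊤ := by
    rw [Submodule.map_smul'', Submodule.map_top, Submodule.range_mkQ]
  rw [← hlift] at hqmem
  obtain ⟨β, hβ, hβq⟩ := hqmem
  have hdiff : (⟨α, hα⟩ : A) - β ∈ Rsub := by
    rw [← Submodule.Quotient.eq]
    exact hβq.symm
  obtain ⟨s, -, hs⟩ := hdiff
  -- hs : algebraMap s = α - β.val
  have hsup : toK R K (Ideal.span {a} ⊔ I) =
      toK R K (Ideal.span {a}) ⊔ toK R K I := Submodule.map_sup _ _ _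
  rw [hsup]
  show a • α ∈ toK R K (Ideal.span {a}) ⊔ toK R K I
  have hsplit : a • α = a • (α - (β : K)) + a • (β : K) := by rw [smul_sub, sub_add_cancel]
  rw [hsplit]
  refine Submodule.add_mem_sup ?_ ?_
  · refine ⟨a * s, Ideal.mem_span_singleton.mpr ⟨s, rfl⟩, ?_⟩
    have h4 : (algebraMap R K) s = α - (β : K) := by
      simpa using hs
    simp [Algebra.linearMap_apply, map_mul, h4, Algebra.smul_def]
  · refine Submodule.smul_induction_on hβ (fun r hr n _ => ?_)
      (fun y z hy hz => by simpa [smul_add] using (toK R K I).add_mem hy hz)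
    have hra : a * r ∈ I := by
      rw [hJ, Ideal.mem_colon_span_singleton] at hr
      rwa [mul_comm]
    have h1 : (algebraMap R K) (a * r) ∈ toK R K I := ⟨a * r, hra, rfl⟩
    have h2 := n.2 _ h1
    have : a • ((r • n : A) : K) = (n : K) * (algebraMap R K) (a * r) := by
      push_cast
      rw [smul_smul, Algebra.smul_def, map_mul, mul_comm]
    rwa [this]
end

section
/- Let I be an m-primary ideal satisfying Condition (C) and let J be an m-primary ideal of R containing an element b with J² = bJ and J = (b) :_R J. If I ⊆ J, then J = (b) + I. -/
set_option synthInstance.maxHeartbeats 1000000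
set_option maxHeartbeats 2000000
set_option linter.unnecessarySimpa false

open IsLocalRing Pointwise

theorem stmt3 (R : Type*) [CommRing R] [IsOneDimCMLocal R]
    (K : Type*) [CommRing K] [Algebra R K] [IsFractionRing R K]
    (I : Ideal R) (t : ℕ) (hC : ConditionC R K I t)
    (J : Ideal R) (hJm : J.radical = (⊥ : Ideal R).jacobson) (hJtop : J ≠ ⊤)
    (b : R) (hb : b ∈ J) (hred : J ^ 2 = Ideal.span {b} * J)
    (hcol : J = Submodule.colon (Ideal.span {b} : Ideal R) J)
    (hIJ : I ≤ J) :
    J = Ideal.span {b} ⊔ I := by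
  classical
  obtain ⟨-, -, ht, ⟨e⟩, hA⟩ := hC
  -- notation
  set A := qcolon R K (toK R K I) (toK R K I) with hAdef
  have mem_qcolon : ∀ (X Y : Submodule R K) (z : K),
      z ∈ qcolon R K X Y ↔ ∀ y ∈ Y, z * y ∈ X := fun _ _ _ => Iff.rfl
  have mem_toK : ∀ (I' : Ideal R) (y : K),
      y ∈ toK R K I' ↔ ∃ i ∈ I', algebraMap R K i = y := by
    intro I' y
    simp [toK, Submodule.mem_map, Algebra.linearMap_apply]
  -- a nonzerodivisor in J
  obtain ⟨a, ham, hanzd⟩ := IsOneDimCMLocal.depth_pos (R := R)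
  have haJ : a ∈ J.radical := hJm ▸ ham
  obtain ⟨k, hak⟩ := Ideal.mem_radical_iff.mp haJ
  -- b is a nonzerodivisor
  have hbnzd : b ∈ nonZeroDivisors R := by
    rw [mem_nonZeroDivisors_iff_right]
    intro c hc
    have h2 : a ^ k * a ^ k ∈ J ^ 2 := by
      rw [sq]; exact Ideal.mul_mem_mul hak hak
    rw [hred] at h2
    have h3 : a ^ k * a ^ k ∈ Ideal.span {b} := Ideal.mul_le_left h2
    obtain ⟨d, hd⟩ := Ideal.mem_span_singleton'.mp h3
    have h4 : c * (a ^ k * a ^ k) = 0 := by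
      rw [← hd, ← mul_assoc, mul_comm c d, mul_assoc, hc, mul_zero]
    have hnz : a ^ k * a ^ k ∈ nonZeroDivisors R :=
      mul_mem (pow_mem hanzd k) (pow_mem hanzd k)
    exact (mem_nonZeroDivisors_iff_right.mp hnz) c h4
  have hinj : Function.Injective (algebraMap R K) := IsFractionRing.injective R K
  have hbu : IsUnit (algebraMap R K b) := IsLocalization.map_units K ⟨b, hbnzd⟩
  refine le_antisymm ?_ (sup_le ((Ideal.span_singleton_le_iff_mem J).mpr hb) hIJ)
  intro x hx
  -- z = x / b
  obtain ⟨v, hv⟩ := hbu.exists_right_inv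
  set z : K := algebraMap R K x * v with hzdef
  have hbz : algebraMap R K b * z = algebraMap R K x := by
    rw [hzdef, ← mul_assoc, mul_comm (algebraMap R K b), mul_assoc, hv, mul_one]
  -- z ∈ A
  have hzA : z ∈ A := by
    rw [hA, mem_qcolon]
    intro y hy
    obtain ⟨i, hiI, rfl⟩ := (mem_toK I y).mp hy
    have hxi : x * i ∈ Ideal.span {b} := by
      have : x * i ∈ J ^ 2 := by rw [sq]; exact Ideal.mul_mem_mul hx (hIJ hiI)
      rw [hred] at this
      exact Ideal.mul_le_left this
    obtain ⟨r, hr⟩ := Ideal.mem_span_singleton'.mp hxi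
    have : z * algebraMap R K i = algebraMap R K r := by
      apply hbu.mul_left_cancel
      rw [← mul_assoc, hbz, ← map_mul, ← map_mul, ← hr, mul_comm r b, map_mul]
    rw [this, mem_toK]
    exact ⟨r, trivial, rfl⟩
  set N := Submodule.comap A.subtype (toK R K (⊤ : Ideal R)) with hNdef
  set zb : A ⧸ N := Submodule.Quotient.mk ⟨z, hzA⟩ with hzb
  have hbzb : b • zb = 0 := by
    rw [hzb, ← Submodule.Quotient.mk_smul, Submodule.Quotient.mk_eq_zero]
    show (A.subtype (b • ⟨z, hzA⟩)) ∈ toK R K (⊤ : Ideal R)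
    rw [mem_toK]
    refine ⟨x, trivial, ?_⟩
    simp only [Submodule.subtype_apply, Submodule.coe_smul, SetLike.val_smul]
    rw [Algebra.smul_def, hbz]
  -- coordinates
  set c : Fin t → R ⧸ I := e zb with hc
  have hbc : ∀ i, b • c i = 0 := by
    intro i
    have : b • c = 0 := by rw [hc, ← map_smul, hbzb, map_zero]
    exact congrFun this i
  choose cc hcc using fun i => Ideal.Quotient.mk_surjective (c i)
  have hbcc : ∀ i, b * cc i ∈ I := by
    intro i
    rw [← Ideal.Quotient.eq_zero_iff_mem, map_mul, hcc]
    have : (Ideal.Quotient.mk I) b * c i = b • c i := by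
      rw [Algebra.smul_def, Ideal.Quotient.algebraMap_eq]
    rw [this]
    exact hbc i
  choose g hg using fun i : Fin t =>
    Submodule.Quotient.mk_surjective N (e.symm (Pi.single i (1 : R ⧸ I)))
  -- z̄ = mk (∑ cc i • g i)
  have hzrep : zb = Submodule.Quotient.mk (∑ i, cc i • g i) := by
    have h1 : c = ∑ i, cc i • (Pi.single i (1 : R ⧸ I) : Fin t → R ⧸ I) := by
      rw [← Finset.univ_sum_single c]
      refine Finset.sum_congr rfl fun i _ => ?_
      rw [← Pi.single_smul, ← hcc i]
      congr 1
      rw [Algebra.smul_def, Ideal.Quotient.algebraMap_eq, mul_one]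
    have h2 : zb = e.symm c := by rw [hc, LinearEquiv.symm_apply_apply]
    rw [h2, h1, map_sum, ← Submodule.mkQ_apply, map_sum]
    refine Finset.sum_congr rfl fun i _ => ?_
    rw [map_smul, map_smul, Submodule.mkQ_apply, hg i]
  have hdiff : ((⟨z, hzA⟩ - ∑ i, cc i • g i : A) : K) ∈ toK R K (⊤ : Ideal R) := by
    have := (Submodule.Quotient.eq N).mp (hzb ▸ hzrep)
    exact this
  obtain ⟨r, -, hr⟩ := (mem_toK ⊤ _).mp hdiff
  -- each (b * cc i) • g i lands in I
  have hgi : ∀ i, ∃ w ∈ I, algebraMap R K w = (b * cc i) • ((g i : A) : K) := by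
    intro i
    have hmem : ((g i : A) : K) * algebraMap R K (b * cc i) ∈ toK R K I :=
      (g i).2 _ ((mem_toK I _).mpr ⟨b * cc i, hbcc i, rfl⟩)
    obtain ⟨w, hwI, hw⟩ := (mem_toK I _).mp hmem
    exact ⟨w, hwI, by rw [hw, Algebra.smul_def, mul_comm]⟩
  choose w hwI hw using hgi
  -- conclude
  have hcoe : ((⟨z, hzA⟩ - ∑ i, cc i • g i : A) : K)
      = z - ∑ i, cc i • ((g i : A) : K) := by
    push_cast
    rfl
  rw [hcoe] at hr
  have hzsum : z = algebraMap R K r + ∑ i, cc i • ((g i : A) : K) :=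
    eq_add_of_sub_eq hr.symm
  have hxval : algebraMap R K x = algebraMap R K (b * r + ∑ i, w i) := by
    rw [← hbz, hzsum, mul_add, Finset.mul_sum, map_add, map_mul, map_sum]
    congr 1
    refine Finset.sum_congr rfl fun i _ => ?_
    rw [hw i, Algebra.smul_def, Algebra.smul_def, map_mul, mul_assoc]
  have hxeq : x = b * r + ∑ i, w i := hinj hxval
  rw [hxeq]
  exact Submodule.add_mem _
    (Submodule.mem_sup_left (Ideal.mem_span_singleton'.mpr ⟨r, mul_comm r b⟩))
    (Submodule.mem_sup_right (Ideal.sum_mem I fun i _ => hwI i))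
end

section
/- With I satisfying Condition (C), J m-primary with J² = bJ, J = (b) :_R J, I ⊊ J, and B = J : J, the quotient A/B is isomorphic to (B/𝔞)^⊕t as a B-module, where 𝔞 = b⁻¹I. -/
set_option synthInstance.maxHeartbeats 1000000
set_option maxHeartbeats 2000000
set_option linter.unnecessarySimpa false

open IsLocalRing Pointwise

theorem stmt4 (R : Type*) [CommRing R] [IsOneDimCMLocal R]
    (K : Type*) [CommRing K] [Algebra R K] [IsFractionRing R K]
    (I : Ideal R) (t : ℕ) (hC : ConditionC R K I t)
    (J : Ideal R) (hJm : J.radical = (⊥ : Ideal R).jacobson) (hJtop : J ≠ ⊤)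
    (b : R) (hb : b ∈ J) (hred : J ^ 2 = Ideal.span {b} * J)
    (hcol : J = Submodule.colon (Ideal.span {b} : Ideal R) J)
    (hIJ : I < J) :
    ∃ A' B' a' : Submodule (endAlg R K J) (K),
      (A' : Set (K)) = (qcolon R K (toK R K I) (toK R K I) : Set (K)) ∧
      (B' : Set (K)) = (endAlg R K J : Set (K)) ∧
      (a' : Set (K)) =
        (qcolon R K (toK R K I) (toK R K (Ideal.span {b})) : Set (K)) ∧
      Nonempty ((A' ⧸ Submodule.comap A'.subtype B') ≃ₗ[endAlg R K J]
        (Fin t → (B' ⧸ Submodule.comap B'.subtype a'))) := by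
  classical
  obtain ⟨hIrad, hItop, htpos, ⟨φ⟩, hAeq⟩ := hC
  have hIJle : I ≤ J := le_of_lt hIJ
  -- basic membership lemmas
  have mem_toK : ∀ (L : Ideal R) (z : K),
      z ∈ toK R K L ↔ ∃ x ∈ L, algebraMap R K x = z := by
    intro L z
    simp [toK, Submodule.mem_map, Algebra.linearMap_apply]
  have mem_qc : ∀ (X Y : Submodule R K) (z : K),
      z ∈ qcolon R K X Y ↔ ∀ y ∈ Y, z * y ∈ X := fun _ _ _ => Iff.rfl
  have mem_S : ∀ z : K, z ∈ endAlg R K J ↔ ∀ y ∈ toK R K J, z * y ∈ toK R K J :=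
    fun _ => Iff.rfl
  have hsmulK : ∀ (L : Ideal R) (r : R) (z : K), z ∈ toK R K L →
      algebraMap R K r * z ∈ toK R K L := by
    intro L r z hz
    simpa [Algebra.smul_def] using (toK R K L).smul_mem r hz
  have htoKmono : ∀ {L L' : Ideal R}, L ≤ L' → ∀ z ∈ toK R K L, z ∈ toK R K L' :=
    fun h z hz => Submodule.map_mono h hz
  have hsubRk : ∀ (L : Ideal R) (z : K), z ∈ toK R K L → z ∈ toK R K (⊤ : Ideal R) :=
    fun L => htoKmono le_top
  -- b is a nonzerodivisor
  obtain ⟨a, ham, hanzd⟩ := IsOneDimCMLocal.depth_pos (R := R)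
  have haJrad : a ∈ J.radical := by rw [hJm]; exact ham
  obtain ⟨n, hanJ⟩ := Ideal.mem_radical_iff.mp haJrad
  have hsq : a ^ n * a ^ n ∈ Ideal.span {b} * J := by
    rw [← hred, pow_two]
    exact Ideal.mul_mem_mul hanJ hanJ
  obtain ⟨d, hdJ, hbd⟩ := Ideal.mem_span_singleton_mul.mp hsq
  have hbnzd : b ∈ nonZeroDivisors R := by
    rw [mem_nonZeroDivisors_iff_right]
    intro x hx
    have hnz : a ^ n * a ^ n ∈ nonZeroDivisors R :=
      mul_mem (pow_mem hanzd n) (pow_mem hanzd n)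
    refine mem_nonZeroDivisors_iff_right.mp hnz x ?_
    calc x * (a ^ n * a ^ n) = x * (b * d) := by rw [hbd]
      _ = x * b * d := by ring
      _ = 0 := by rw [hx, zero_mul]
  have hβ : IsUnit (algebraMap R K b) :=
    IsLocalization.map_units K (⟨b, hbnzd⟩ : nonZeroDivisors R)
  -- (L1): R maps into B = endAlg R K J
  have hRinB : ∀ r : R, algebraMap R K r ∈ endAlg R K J := by
    intro r y hy
    obtain ⟨j, hj, rfl⟩ := (mem_toK J y).mp hy
    exact (mem_toK J _).mpr ⟨r * j, J.mul_mem_left r hj, by rw [map_mul]⟩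
  have hRkB : ∀ z ∈ toK R K (⊤ : Ideal R), z ∈ endAlg R K J := by
    intro z hz
    obtain ⟨r, -, rfl⟩ := (mem_toK _ z).mp hz
    exact hRinB r
  -- (L2): B ⊆ A
  have hBA : ∀ s ∈ endAlg R K J, s ∈ qcolon R K (toK R K I) (toK R K I) := by
    intro s hs
    rw [hAeq, mem_qc]
    intro y hy
    exact hsubRk J _ (hs y (htoKmono hIJle y hy))
  -- (L3): A is multiplicatively closed
  have hAmul : ∀ z w : K, z ∈ qcolon R K (toK R K I) (toK R K I) →
      w ∈ qcolon R K (toK R K I) (toK R K I) →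
      z * w ∈ qcolon R K (toK R K I) (toK R K I) := by
    intro z w hz hw
    rw [mem_qc]
    intro y hy
    rw [mul_assoc]
    exact hz _ (hw y hy)
  -- membership in 𝔞 = qcolon (toK I) (toK (span b))
  have mem_aq : ∀ z : K, z ∈ qcolon R K (toK R K I) (toK R K (Ideal.span {b})) ↔
      z * algebraMap R K b ∈ toK R K I := by
    intro z
    constructor
    · intro h
      exact h _ ((mem_toK _ _).mpr ⟨b, Ideal.mem_span_singleton_self b, rfl⟩)
    · intro h y hy
      obtain ⟨x, hx, rfl⟩ := (mem_toK _ y).mp hy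
      obtain ⟨r, rfl⟩ := Ideal.mem_span_singleton'.mp hx
      have : z * algebraMap R K (r * b) = algebraMap R K r * (z * algebraMap R K b) := by
        rw [map_mul]; ring
      rw [this]
      exact hsmulK _ r _ h
  -- (L7): s * b ∈ toK J for s ∈ B
  have hbS : ∀ s ∈ endAlg R K J, s * algebraMap R K b ∈ toK R K J := by
    intro s hs
    exact hs _ ((mem_toK J _).mpr ⟨b, hb, rfl⟩)
  -- (L4): 𝔞 ⊆ B
  have haB : ∀ z ∈ qcolon R K (toK R K I) (toK R K (Ideal.span {b})),
      z ∈ endAlg R K J := by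
    intro z hz
    rw [mem_aq] at hz
    obtain ⟨x, hxI, hxz⟩ := (mem_toK I _).mp hz
    rw [mem_S]
    intro y hy
    obtain ⟨j, hjJ, rfl⟩ := (mem_toK J y).mp hy
    have hxj : x * j ∈ Ideal.span {b} * J := by
      rw [← hred, pow_two]
      exact Ideal.mul_mem_mul (hIJle hxI) hjJ
    obtain ⟨j', hj'J, hbj'⟩ := Ideal.mem_span_singleton_mul.mp hxj
    have heq : algebraMap R K b * (z * algebraMap R K j) = algebraMap R K b * algebraMap R K j' := by
      calc algebraMap R K b * (z * algebraMap R K j)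
          = (z * algebraMap R K b) * algebraMap R K j := by ring
        _ = algebraMap R K x * algebraMap R K j := by rw [hxz]
        _ = algebraMap R K (x * j) := by rw [map_mul]
        _ = algebraMap R K (b * j') := by rw [hbj']
        _ = algebraMap R K b * algebraMap R K j' := by rw [map_mul]
    have := hβ.mul_left_cancel heq
    rw [this]
    exact (mem_toK J _).mpr ⟨j', hj'J, rfl⟩
  -- (L5): 𝔞 · A ⊆ 𝔞
  have haA : ∀ z ∈ qcolon R K (toK R K I) (toK R K (Ideal.span {b})),
      ∀ w ∈ qcolon R K (toK R K I) (toK R K I),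
      z * w ∈ qcolon R K (toK R K I) (toK R K (Ideal.span {b})) := by
    intro z hz w hw
    rw [mem_aq] at hz ⊢
    have : z * w * algebraMap R K b = w * (z * algebraMap R K b) := by ring
    rw [this]
    exact hw _ hz
    -- pick representatives f i ∈ A of the standard basis under φ
  have hFex : ∀ i : Fin t, ∃ F : ↥(qcolon R K (toK R K I) (toK R K I)),
      Submodule.Quotient.mk (p := Submodule.comap
        (qcolon R K (toK R K I) (toK R K I)).subtype (toK R K (⊤ : Ideal R))) F
        = φ.symm (Pi.single i 1) :=
    fun i => Submodule.Quotient.mk_surjective _ _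
  choose F hF using hFex
  set f : Fin t → K := fun i => ((F i : K)) with hfdef
  have hfA : ∀ i, f i ∈ qcolon R K (toK R K I) (toK R K I) := fun i => (F i).2
  -- key sum computation at the quotient level
  have keysum : ∀ r : Fin t → R,
      Submodule.Quotient.mk (p := Submodule.comap
        (qcolon R K (toK R K I) (toK R K I)).subtype (toK R K (⊤ : Ideal R)))
        (∑ i, r i • F i) = φ.symm (fun j => Ideal.Quotient.mk I (r j)) := by
    intro r
    have h1 : ∀ i : Fin t,
        Submodule.Quotient.mk (p := Submodule.comap
          (qcolon R K (toK R K I) (toK R K I)).subtype (toK R K (⊤ : Ideal R)))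
          (r i • F i) = φ.symm (Pi.single i (Ideal.Quotient.mk I (r i))) := by
      intro i
      rw [Submodule.Quotient.mk_smul, hF i, ← map_smul, ← Pi.single_smul]
      congr 2
      simp [Algebra.smul_def, Ideal.Quotient.algebraMap_eq]
    have h2 : (∑ i, Pi.single i (Ideal.Quotient.mk I (r i)) : Fin t → R ⧸ I)
        = fun j => Ideal.Quotient.mk I (r j) := Finset.univ_sum_single _
    calc Submodule.Quotient.mk (∑ i, r i • F i)
        = ∑ i, Submodule.Quotient.mk (p := Submodule.comap
            (qcolon R K (toK R K I) (toK R K I)).subtype (toK R K (⊤ : Ideal R)))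
            (r i • F i) := by
          rw [← Submodule.mkQ_apply, map_sum]; rfl
      _ = ∑ i, φ.symm (Pi.single i (Ideal.Quotient.mk I (r i))) := by
          exact Finset.sum_congr rfl fun i _ => h1 i
      _ = φ.symm (∑ i, Pi.single i (Ideal.Quotient.mk I (r i))) := by rw [map_sum]
      _ = _ := by rw [h2]
  -- coercion of the sum
  have hcoe : ∀ r : Fin t → R, ((∑ i, r i • F i : ↥(qcolon R K (toK R K I) (toK R K I))) : K)
      = ∑ i, algebraMap R K (r i) * f i := by
    intro r
    rw [Submodule.coe_sum]
    exact Finset.sum_congr rfl fun i _ => by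
      simp [Algebra.smul_def]; rfl
  -- key fact 1: coefficients of elements of R are in I
  have keyIff : ∀ r : Fin t → R,
      (∑ i, algebraMap R K (r i) * f i) ∈ toK R K (⊤ : Ideal R) → ∀ i, r i ∈ I := by
    intro r hr i
    have hX : (∑ i, r i • F i : ↥(qcolon R K (toK R K I) (toK R K I))) ∈
        Submodule.comap (qcolon R K (toK R K I) (toK R K I)).subtype
          (toK R K (⊤ : Ideal R)) := by
      rw [Submodule.mem_comap]
      show ((∑ i, r i • F i : ↥(qcolon R K (toK R K I) (toK R K I))) : K) ∈ _
      rw [hcoe]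
      exact hr
    have h0 := (Submodule.Quotient.mk_eq_zero _).mpr hX
    rw [keysum] at h0
    have h1 : (fun j => Ideal.Quotient.mk I (r j)) = (0 : Fin t → R ⧸ I) :=
      (LinearEquiv.map_eq_zero_iff φ.symm).mp h0
    have h2 := congrFun h1 i
    rwa [Pi.zero_apply, Ideal.Quotient.eq_zero_iff_mem] at h2
  -- key fact 2: every element of A is congruent to a combination of the f i mod R
  have keyRepr : ∀ z : K, ∀ hz : z ∈ qcolon R K (toK R K I) (toK R K I),
      ∃ r : Fin t → R, z - (∑ i, algebraMap R K (r i) * f i) ∈ toK R K (⊤ : Ideal R) := by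
    intro z hz
    have hsurj : ∀ j : Fin t, ∃ r : R, Ideal.Quotient.mk I r =
        φ (Submodule.Quotient.mk ⟨z, hz⟩) j := fun j => Ideal.Quotient.mk_surjective _
    choose r hr using hsurj
    refine ⟨r, ?_⟩
    have h0 : Submodule.Quotient.mk (p := Submodule.comap
        (qcolon R K (toK R K I) (toK R K I)).subtype (toK R K (⊤ : Ideal R)))
        ((⟨z, hz⟩ : ↥(qcolon R K (toK R K I) (toK R K I))) - ∑ i, r i • F i) = 0 := by
      rw [Submodule.Quotient.mk_sub, keysum]
      have : (fun j => Ideal.Quotient.mk I (r j)) = φ (Submodule.Quotient.mk ⟨z, hz⟩) :=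
        funext hr
      rw [this, LinearEquiv.symm_apply_apply, sub_self]
    have hmem := (Submodule.Quotient.mk_eq_zero _).mp h0
    rw [Submodule.mem_comap] at hmem
    have hc : (((⟨z, hz⟩ : ↥(qcolon R K (toK R K I) (toK R K I))) - ∑ i, r i • F i :
        ↥(qcolon R K (toK R K I) (toK R K I))) : K)
        = z - ∑ i, algebraMap R K (r i) * f i := by
      rw [Submodule.coe_sub, hcoe]
    rw [Submodule.subtype_apply, hc] at hmem
    exact hmem
    -- main construction, abstracted over the submodules with given carriers
  have hmain : ∀ (A' B' a' : Submodule ↥(endAlg R K J) K),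
      (A' : Set K) = (qcolon R K (toK R K I) (toK R K I) : Set K) →
      (B' : Set K) = (endAlg R K J : Set K) →
      (a' : Set K) = (qcolon R K (toK R K I) (toK R K (Ideal.span {b})) : Set K) →
      Nonempty ((A' ⧸ Submodule.comap A'.subtype B') ≃ₗ[↥(endAlg R K J)]
        (Fin t → (B' ⧸ Submodule.comap B'.subtype a'))) := by
    intro A' B' a' hA' hB' ha'
    have mA : ∀ x : K, x ∈ A' ↔ x ∈ qcolon R K (toK R K I) (toK R K I) := by
      intro x; rw [← SetLike.mem_coe, hA', SetLike.mem_coe]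
    have mB : ∀ x : K, x ∈ B' ↔ x ∈ endAlg R K J := by
      intro x; rw [← SetLike.mem_coe, hB', SetLike.mem_coe]
    have ma : ∀ x : K, x ∈ a' ↔ x ∈ qcolon R K (toK R K I) (toK R K (Ideal.span {b})) := by
      intro x; rw [← SetLike.mem_coe, ha', SetLike.mem_coe]
    have hmem1 : ∀ (s : ↥B') (i : Fin t), (s : K) * f i ∈ A' :=
      fun s i => (mA _).mpr (hAmul _ _ (hBA _ ((mB _).mp s.2)) (hfA i))
    -- the linear maps s ↦ s * f i
    let m : ∀ i : Fin t, ↥B' →ₗ[↥(endAlg R K J)] ↥A' := fun i =>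
        { toFun := fun s => ⟨(s : K) * f i, hmem1 s i⟩
          map_add' := fun x y => Subtype.ext (by simp [add_mul])
          map_smul' := fun c x => Subtype.ext (by
            simp only [Submodule.coe_smul, Subalgebra.smul_def, RingHom.id_apply,
              smul_eq_mul]
            ring) }
    have hm_apply : ∀ (i : Fin t) (s : ↥B'), ((m i s : ↥A') : K) = (s : K) * f i := by
      intro i s; rfl
    -- descend to the quotients
    have hker : ∀ i : Fin t, Submodule.comap B'.subtype a' ≤
        LinearMap.ker ((Submodule.comap A'.subtype B').mkQ.comp (m i)) := by
      intro i s hs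
      rw [LinearMap.mem_ker, LinearMap.comp_apply, Submodule.mkQ_apply,
        Submodule.Quotient.mk_eq_zero, Submodule.mem_comap, Submodule.subtype_apply,
        hm_apply]
      rw [Submodule.mem_comap, Submodule.subtype_apply] at hs
      exact (mB _).mpr (haB _ (haA _ ((ma _).mp hs) _ (hfA i)))
    let μ : ∀ i : Fin t, (B' ⧸ Submodule.comap B'.subtype a')
        →ₗ[↥(endAlg R K J)] (A' ⧸ Submodule.comap A'.subtype B') := fun i =>
      Submodule.liftQ _ ((Submodule.comap A'.subtype B').mkQ.comp (m i)) (hker i)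
    let Ψ : (Fin t → (B' ⧸ Submodule.comap B'.subtype a'))
        →ₗ[↥(endAlg R K J)] (A' ⧸ Submodule.comap A'.subtype B') :=
      ∑ i, (μ i).comp (LinearMap.proj i)
    have hΨmk : ∀ s : Fin t → ↥B',
        Ψ (fun i => Submodule.Quotient.mk (s i)) =
          Submodule.Quotient.mk (∑ i, m i (s i)) := by
      intro s
      have h1 : Ψ (fun i => Submodule.Quotient.mk (s i)) =
          ∑ i, Submodule.Quotient.mk (p := Submodule.comap A'.subtype B') (m i (s i)) := by
        show (∑ i, (μ i).comp (LinearMap.proj i)) _ = _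
        rw [LinearMap.sum_apply]
        refine Finset.sum_congr rfl fun i _ => ?_
        rw [LinearMap.comp_apply, LinearMap.proj_apply]
        show μ i (Submodule.Quotient.mk (s i)) = _
        rw [Submodule.liftQ_apply, LinearMap.comp_apply, Submodule.mkQ_apply]
      rw [h1, ← Submodule.mkQ_apply, map_sum]
      rfl
    -- surjectivity
    have hsurj : Function.Surjective Ψ := by
      intro y
      obtain ⟨x, rfl⟩ := Submodule.Quotient.mk_surjective _ y
      obtain ⟨r, hr⟩ := keyRepr (x : K) ((mA _).mp x.2)
      refine ⟨fun i => Submodule.Quotient.mk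
        ⟨algebraMap R K (r i), (mB _).mpr (hRinB (r i))⟩, ?_⟩
      rw [hΨmk, Submodule.Quotient.eq, Submodule.mem_comap, Submodule.subtype_apply]
      have hc : ((∑ i, m i ⟨algebraMap R K (r i), (mB _).mpr (hRinB (r i))⟩ - x : ↥A') : K)
          = -((x : K) - ∑ i, algebraMap R K (r i) * f i) := by
        rw [Submodule.coe_sub, Submodule.coe_sum]
        rw [neg_sub]
        congr 1
      rw [hc]
      exact (mB _).mpr (Subalgebra.neg_mem _ (hRkB _ hr))
    -- injectivity
    have hinj : Function.Injective Ψ := by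
      rw [← LinearMap.ker_eq_bot]
      rw [LinearMap.ker_eq_bot']
      intro c hc
      choose s hs using fun i =>
        Submodule.Quotient.mk_surjective (Submodule.comap B'.subtype a') (c i)
      have hc' : Ψ (fun i => Submodule.Quotient.mk (s i)) = 0 := by
        have : (fun i => Submodule.Quotient.mk (s i)) = c := funext hs
        rw [this]; exact hc
      rw [hΨmk, Submodule.Quotient.mk_eq_zero, Submodule.mem_comap,
        Submodule.subtype_apply] at hc'
      have hXcoe : ((∑ i, m i (s i) : ↥A') : K) = ∑ i, (s i : K) * f i := by
        rw [Submodule.coe_sum]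
        exact Finset.sum_congr rfl fun i _ => hm_apply i _
      have hXB : (∑ i, (s i : K) * f i) ∈ endAlg R K J := by
        rw [← hXcoe]; exact (mB _).mp hc'
      have h1 : ∀ i, (s i : K) * algebraMap R K b ∈ toK R K J :=
        fun i => hbS _ ((mB _).mp (s i).2)
      choose j hjJ hjeq using fun i => (mem_toK J _).mp (h1 i)
      have h2 : (∑ i, algebraMap R K (j i) * f i) ∈ toK R K (⊤ : Ideal R) := by
        have heq : (∑ i, algebraMap R K (j i) * f i)
            = (∑ i, (s i : K) * f i) * algebraMap R K b := by
          rw [Finset.sum_mul]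
          refine Finset.sum_congr rfl fun i _ => ?_
          rw [hjeq i]; ring
        rw [heq]
        exact hsubRk J _ (hbS _ hXB)
      have h3 := keyIff j h2
      funext i
      rw [← hs i, Pi.zero_apply, Submodule.Quotient.mk_eq_zero, Submodule.mem_comap,
        Submodule.subtype_apply]
      refine (ma _).mpr ((mem_aq _).mpr ?_)
      rw [← hjeq i]
      exact (mem_toK I _).mpr ⟨j i, h3 i, rfl⟩
    exact ⟨(LinearEquiv.ofBijective Ψ ⟨hinj, hsurj⟩).symm⟩

  refine ⟨{ carrier := (qcolon R K (toK R K I) (toK R K I) : Set K)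
            add_mem' := fun ha hb => Submodule.add_mem _ ha hb
            zero_mem' := Submodule.zero_mem _
            smul_mem' := by
              intro c x hx
              have := hAmul _ _ (hBA _ c.2) hx
              simpa [Subalgebra.smul_def] using this },
          { carrier := (endAlg R K J : Set K)
            add_mem' := fun ha hb => add_mem ha hb
            zero_mem' := zero_mem _
            smul_mem' := by
              intro c x hx
              have := mul_mem c.2 hx
              simpa [Subalgebra.smul_def] using this },
          { carrier := (qcolon R K (toK R K I) (toK R K (Ideal.span {b})) : Set K)
            add_mem' := fun ha hb => Submodule.add_mem _ ha hb
            zero_mem' := Submodule.zero_mem _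
            smul_mem' := by
              intro c x hx
              have := haA _ hx _ (hBA _ c.2)
              rw [mul_comm] at this
              simpa [Subalgebra.smul_def] using this },
          rfl, rfl, rfl, hmain _ _ _ rfl rfl rfl⟩
end

section
/- With I satisfying Condition (C), J m-primary with J² = bJ, J = (b) :_R J, and I ⊊ J: (1) b⁻¹I ∩ R = I :_R J; (2) ℓ_R((I :_R J)/I) = ℓ_R(R/J); (3) I = (b·(I :_R J))A. -/
set_option synthInstance.maxHeartbeats 1000000
set_option maxHeartbeats 2000000
set_option linter.unnecessarySimpa false

open IsLocalRing Pointwise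

section AuxLength

open Order

lemma wb_add_ne_top {a b : WithBot ℕ∞} (ha : a ≠ ⊤) (hb : b ≠ ⊤) : a + b ≠ ⊤ := by
  induction a using WithBot.recBotCoe with
  | bot => simp
  | coe x =>
    induction b using WithBot.recBotCoe with
    | bot => simp
    | coe y =>
      rw [← WithBot.coe_add]
      have hx : x ≠ ⊤ := by simpa using ha
      have hy : y ≠ ⊤ := by simpa using hb
      exact fun hcontra => WithTop.add_ne_top.mpr ⟨hx, hy⟩ (WithBot.coe_inj.mp hcontra)

lemma wb_cancel {a b c : WithBot ℕ∞} (hc : c ≠ ⊥) (hc' : c ≠ ⊤) (h : a + c = b + c) : a = b := by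
  induction c using WithBot.recBotCoe with
  | bot => exact absurd rfl hc
  | coe x =>
    have hx : x ≠ ⊤ := by simpa using hc'
    induction a using WithBot.recBotCoe with
    | bot =>
      rw [WithBot.bot_add] at h
      induction b using WithBot.recBotCoe with
      | bot => rfl
      | coe y => rw [← WithBot.coe_add] at h; exact absurd h.symm (by simp)
    | coe u =>
      induction b using WithBot.recBotCoe with
      | bot => rw [WithBot.bot_add, ← WithBot.coe_add] at h; exact absurd h (by simp)
      | coe w =>
        rw [← WithBot.coe_add, ← WithBot.coe_add, WithBot.coe_inj] at h
        rw [WithBot.coe_inj]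
        exact WithTop.add_right_cancel hx h

lemma height_add_one_le' {α : Type*} [Preorder α] {x y : α} (h : x < y) :
    Order.height x + 1 ≤ Order.height y := by
  rcases eq_or_ne (Order.height x) ⊤ with hx | hx
  · have hy : Order.height y = ⊤ := top_le_iff.mp (hx ▸ Order.height_mono h.le)
    simp [hx, hy]
  · exact Order.add_one_le_of_lt (Order.height_strictMono h (lt_top_iff_ne_top.mpr hx))

lemma ltseries_prod_length_le' {α β : Type*} [PartialOrder α] [PartialOrder β] :
    ∀ (n : ℕ) (q : LTSeries (α × β)), q.length = n →
      (n : ℕ∞) ≤ Order.height q.last.1 + Order.height q.last.2 := by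
  intro n
  induction n with
  | zero => intro q _; simp
  | succ k ih =>
    intro q hq
    have hne : q.length ≠ 0 := by omega
    have hstep : q.eraseLast.last < q.last := RelSeries.eraseLast_last_rel_last q hne
    have hlen : q.eraseLast.length = k := by rw [RelSeries.eraseLast_length, hq]; omega
    have IH := ih q.eraseLast hlen
    have hcast : ((k + 1 : ℕ) : ℕ∞) = (k : ℕ∞) + 1 := by push_cast; ring
    rw [hcast]
    rcases Prod.lt_iff.mp hstep with ⟨h1, h2⟩ | ⟨h1, h2⟩
    · calc (k : ℕ∞) + 1
          ≤ (Order.height q.eraseLast.last.1 + Order.height q.eraseLast.last.2) + 1 :=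
            add_le_add_left IH 1
        _ = (Order.height q.eraseLast.last.1 + 1) + Order.height q.eraseLast.last.2 := by ring
        _ ≤ Order.height q.last.1 + Order.height q.last.2 :=
            add_le_add (height_add_one_le' h1) (Order.height_mono h2)
    · calc (k : ℕ∞) + 1
          ≤ (Order.height q.eraseLast.last.1 + Order.height q.eraseLast.last.2) + 1 :=
            add_le_add_left IH 1
        _ = Order.height q.eraseLast.last.1 + (Order.height q.eraseLast.last.2 + 1) := by ring
        _ ≤ Order.height q.last.1 + Order.height q.last.2 :=
            add_le_add (Order.height_mono h1) (height_add_one_le' h2)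

variable {R : Type*} [CommRing R] {M M₂ : Type*} [AddCommGroup M] [Module R M]
  [AddCommGroup M₂] [Module R M₂]

lemma rlength_le_add (N : Submodule R M) :
    rlength R M ≤ rlength R (M ⧸ N) + rlength R ↥N := by
  show (⨆ (p : LTSeries (Submodule R M)), (p.length : WithBot ℕ∞)) ≤ _
  refine iSup_le fun p => ?_
  have hFmono : StrictMono (fun X : Submodule R M =>
      ((X.map N.mkQ, X.comap N.subtype) : Submodule R (M ⧸ N) × Submodule R ↥N)) := by
    intro X Y hXY
    refine lt_iff_le_and_ne.mpr ⟨⟨Submodule.map_mono hXY.le, Submodule.comap_mono hXY.le⟩, ?_⟩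
    intro heq
    obtain ⟨h1, h2⟩ := Prod.ext_iff.mp heq
    apply hXY.ne
    have e1 : X ⊔ N = Y ⊔ N := by
      have := congrArg (Submodule.comap N.mkQ) h1
      rwa [Submodule.comap_map_eq, Submodule.comap_map_eq, Submodule.ker_mkQ] at this
    have e2 : N ⊓ X = N ⊓ Y := by
      have := congrArg (Submodule.map N.subtype) h2
      rwa [Submodule.map_comap_subtype, Submodule.map_comap_subtype] at this
    have h4 : Y = (X ⊔ N) ⊓ Y := (inf_eq_right.mpr (e1 ▸ le_sup_left)).symm
    rw [sup_inf_assoc_of_le _ hXY.le, ← e2] at h4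
    exact (h4.trans (sup_eq_left.mpr inf_le_right)).symm
  have key := ltseries_prod_length_le' (p.map _ hFmono).length (p.map _ hFmono) rfl
  have hlen : (p.map _ hFmono).length = p.length := rfl
  rw [hlen] at key
  refine le_trans ?_ (add_le_add (Order.height_le_krullDim ((p.map _ hFmono).last.1))
    (Order.height_le_krullDim ((p.map _ hFmono).last.2)))
  rw [← WithBot.coe_add]
  exact_mod_cast key

lemma add_le_rlength (N : Submodule R M) :
    rlength R (M ⧸ N) + rlength R ↥N ≤ rlength R M := by
  unfold rlength
  rw [Order.krullDim_eq_iSup_length, Order.krullDim_eq_iSup_length,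
    Order.krullDim_eq_iSup_length, ← WithBot.coe_add, WithBot.coe_le_coe,
    ENat.iSup_add]
  refine iSup_le fun q => ?_
  rw [ENat.add_iSup]
  refine iSup_le fun p => ?_
  set P : LTSeries (Submodule R M) :=
    p.map (Submodule.MapSubtype.orderEmbedding N) (Submodule.MapSubtype.orderEmbedding N).strictMono with hP
  set Q : LTSeries (Submodule R M) :=
    q.map (Submodule.comapMkQOrderEmbedding N) (Submodule.comapMkQOrderEmbedding N).strictMono with hQ
  have hPQ : P.last ≤ Q.head := by
    have h1 : P.last ≤ N := by
      show Submodule.map N.subtype p.last ≤ N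
      exact Submodule.map_subtype_le N p.last
    refine h1.trans ?_
    show N ≤ Submodule.comap N.mkQ q.head
    intro x hx
    have : N.mkQ x = 0 := (Submodule.Quotient.mk_eq_zero N).mpr hx
    simp only [Submodule.mem_comap, this]
    exact zero_mem _
  rcases eq_or_lt_of_le hPQ with heq | hlt
  · refine le_trans ?_ (le_iSup _ (P.smash Q heq))
    rw [RelSeries.smash_length]
    exact_mod_cast le_of_eq (by
      show q.length + p.length = P.length + Q.length
      rw [show P.length = p.length from rfl, show Q.length = q.length from rfl]; ring)
  · refine le_trans ?_ (le_iSup _ (P.append Q hlt))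
    rw [RelSeries.append_length]
    exact_mod_cast Nat.le_succ_of_le (le_of_eq (by
      show q.length + p.length = P.length + Q.length
      rw [show P.length = p.length from rfl, show Q.length = q.length from rfl]; ring))

lemma rlength_add (N : Submodule R M) :
    rlength R M = rlength R (M ⧸ N) + rlength R ↥N :=
  le_antisymm (rlength_le_add N) (add_le_rlength N)

lemma rlength_congr (e : M ≃ₗ[R] M₂) : rlength R M = rlength R M₂ :=
  Order.krullDim_eq_of_orderIso (Submodule.orderIsoMapComap e)

lemma rlength_ne_bot : rlength R M ≠ ⊥ := by
  intro h
  have h0 : (0 : WithBot ℕ∞) ≤ rlength R M := Order.krullDim_nonneg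
  rw [h, le_bot_iff] at h0
  exact (by simp : ((0 : ℕ∞) : WithBot ℕ∞) ≠ ⊥) h0

end AuxLength

section AuxFin

universe u
variable {R : Type u} [CommRing R]

lemma rlength_simple_le {M : Type*} [AddCommGroup M] [Module R M]
    (h : IsSimpleModule R M) : rlength R M ≤ 1 := by
  show (⨆ (p : LTSeries (Submodule R M)), (p.length : WithBot ℕ∞)) ≤ 1
  refine iSup_le fun p => ?_
  have hlen : p.length ≤ 1 := by
    by_contra hc
    push_neg at hc
    have h01 : p.toFun ⟨0, by omega⟩ < p.toFun ⟨1, by omega⟩ := p.strictMono (by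
      show (⟨0, by omega⟩ : Fin (p.length + 1)) < ⟨1, by omega⟩
      simp [Fin.lt_def])
    have h12 : p.toFun ⟨1, by omega⟩ < p.toFun ⟨2, by omega⟩ := p.strictMono (by
      show (⟨1, by omega⟩ : Fin (p.length + 1)) < ⟨2, by omega⟩
      simp [Fin.lt_def])
    rcases h.1.eq_bot_or_eq_top (p.toFun ⟨1, by omega⟩) with h1 | h1
    · rw [h1] at h01; exact not_lt_bot h01
    · rw [h1] at h12; exact not_top_lt h12
  exact_mod_cast hlen

lemma rlength_ne_top_of_finiteLength :
    ∀ {M : Type u} [AddCommGroup M] [Module R M], IsFiniteLength R M → rlength R M ≠ ⊤ := by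
  intro M _ _ h
  induction h with
  | of_subsingleton =>
    rename_i M' _ _ _
    have hsub : Subsingleton (Submodule R M') := ⟨fun a b => by
      ext x; rw [Subsingleton.elim x 0]; simp⟩
    have h0 : rlength R M' ≤ 0 := Order.krullDim_nonpos_of_subsingleton
    intro hc
    rw [hc, top_le_iff] at h0
    have h0' : ((0:ℕ∞) : WithBot ℕ∞) = ((⊤:ℕ∞) : WithBot ℕ∞) := h0
    simpa using WithBot.coe_inj.mp h0'
  | of_simple_quotient hfin ih =>
    rename_i M' _ _ N _
    have hle := rlength_le_add N
    have h1 : rlength R (M' ⧸ N) ≤ 1 := rlength_simple_le inferInstance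
    intro hc
    refine wb_add_ne_top (a := rlength R (M' ⧸ N)) (b := rlength R ↥N)
      (fun ht => ?_) ih (top_le_iff.mp (hc ▸ hle))
    rw [ht, top_le_iff] at h1
    have h1' : ((1:ℕ∞) : WithBot ℕ∞) = ((⊤:ℕ∞) : WithBot ℕ∞) := h1
    simpa using WithBot.coe_inj.mp h1'

lemma isArtinian_of_jacobson_pow [IsNoetherianRing R]
    (hmax : ((⊥ : Ideal R).jacobson).IsMaximal) :
    ∀ (n : ℕ) (C : Ideal R), ((⊥ : Ideal R).jacobson) ^ n ≤ C → IsArtinian R (R ⧸ C) := by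
  set m := (⊥ : Ideal R).jacobson with hm
  intro n
  induction n with
  | zero =>
    intro C hC
    rw [pow_zero, Ideal.one_eq_top, top_le_iff] at hC
    have : Subsingleton (R ⧸ C) := by
      rw [hC]
      infer_instance
    infer_instance
  | succ k ih =>
    intro C hC
    set D := C ⊔ m ^ k with hD
    have hDart : IsArtinian R (R ⧸ D) := ih D le_sup_right
    set N : Submodule R (R ⧸ C) := Submodule.map C.mkQ D with hN
    refine (isArtinian_iff_submodule_quotient N).mpr ⟨?_, ?_⟩
    · have hkill : ∀ (c : R), c ∈ m → ∀ x : ↥N, c • x = 0 := by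
        intro c hc x
        obtain ⟨d, hd, hdx⟩ := x.2
        have hcd : c * d ∈ C := by
          rcases Submodule.mem_sup.mp hd with ⟨e, he, f, hf, rfl⟩
          have h1 : c * e ∈ C := C.mul_mem_left c he
          have h2 : c * f ∈ m ^ (k + 1) := by
            rw [pow_succ, mul_comm (m ^ k) m]
            exact Ideal.mul_mem_mul hc hf
          have h2' : c * f ∈ C := hC h2
          rw [mul_add]
          exact C.add_mem h1 h2'
        have : c • (x : R ⧸ C) = 0 := by
          rw [← hdx]
          show c • C.mkQ d = 0
          rw [← map_smul, smul_eq_mul]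
          exact (Submodule.Quotient.mk_eq_zero C).mpr hcd
        exact Subtype.ext (by simpa using this)
      have htor : Module.IsTorsionBySet R ↥N (m : Set R) := fun x c => hkill c.1 c.2 x
      letI : Module (R ⧸ m) ↥N := htor.module
      haveI : IsScalarTower R (R ⧸ m) ↥N := htor.isScalarTower
      letI : Field (R ⧸ m) := Ideal.Quotient.field m
      haveI : Module.Finite R ↥N := by
        haveI : IsNoetherian R (R ⧸ C) := inferInstance
        exact Module.Finite.iff_fg.mpr (IsNoetherian.noetherian N)
      haveI : Module.Finite (R ⧸ m) ↥N := Module.Finite.of_restrictScalars_finite R _ _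
      haveI : IsArtinian (R ⧸ m) ↥N := inferInstance
      have hT : StrictMono (fun W : Submodule R ↥N =>
          ({ carrier := W,
             add_mem' := fun ha hb => W.add_mem ha hb,
             zero_mem' := W.zero_mem,
             smul_mem' := by
               intro c x hx
               obtain ⟨c', rfl⟩ := Ideal.Quotient.mk_surjective c
               rw [Module.IsTorsionBySet.mk_smul htor c' x]
               exact W.smul_mem c' hx } : Submodule (R ⧸ m) ↥N)) := by
        intro W₁ W₂ hW
        refine lt_iff_le_and_ne.mpr ⟨fun x hx => hW.le hx, ?_⟩
        intro hc
        apply hW.ne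
        ext x
        exact Iff.of_eq (congrArg (fun (S : Submodule (R ⧸ m) ↥N) => x ∈ S.carrier) hc)
      exact hT.wellFoundedLT
    · have e := Submodule.quotientQuotientEquivQuotient C D le_sup_left
      exact e.isArtinian_iff.mpr hDart

end AuxFin

theorem stmt5 (R : Type*) [CommRing R] [IsOneDimCMLocal R]
    (K : Type*) [CommRing K] [Algebra R K] [IsFractionRing R K]
    (I : Ideal R) (t : ℕ) (hC : ConditionC R K I t)
    (J : Ideal R) (hJm : J.radical = (⊥ : Ideal R).jacobson) (hJtop : J ≠ ⊤)
    (b : R) (hb : b ∈ J) (hred : J ^ 2 = Ideal.span {b} * J)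
    (hcol : J = Submodule.colon (Ideal.span {b} : Ideal R) J)
    (hIJ : I < J) :
    qcolon R K (toK R K I) (toK R K (Ideal.span {b})) ⊓ toK R K (⊤ : Ideal R) =
      toK R K (Submodule.colon I J) ∧
    rlength R (↥(Submodule.colon I J) ⧸
        Submodule.comap (Submodule.colon I J : Ideal R).subtype I) =
      rlength R (R ⧸ J) ∧
    toK R K I = toK R K (Ideal.span {b} * Submodule.colon I J) *
      qcolon R K (toK R K I) (toK R K I) := by
  classical
  haveI hNoeth : IsNoetherianRing R := IsOneDimCMLocal.noeth
  haveI hLoc : IsLocalRing R := IsOneDimCMLocal.local_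
  obtain ⟨a, ham, hareg⟩ := IsOneDimCMLocal.depth_pos (R := R)
  obtain ⟨hIrad, hItop, htpos, ⟨φ⟩, hAR⟩ := hC
  have hinj : Function.Injective (algebraMap R K) := IsFractionRing.injective R K
  have mem_toK : ∀ (L : Ideal R) (x : R), x ∈ L → algebraMap R K x ∈ toK R K L :=
    fun L x hx => ⟨x, hx, rfl⟩
  have toK_mem : ∀ (L : Ideal R) (x : R), algebraMap R K x ∈ toK R K L → x ∈ L := by
    intro L x hx
    obtain ⟨y, hy, hyx⟩ := hx
    have hyx' : y = x := hinj hyx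
    rwa [← hyx']
  have qmem : ∀ {X Y : Submodule R K} {zk : K}, zk ∈ qcolon R K X Y → ∀ y ∈ Y, zk * y ∈ X :=
    fun h => h
  have qmem' : ∀ {X Y : Submodule R K} {zk : K}, (∀ y ∈ Y, zk * y ∈ X) → zk ∈ qcolon R K X Y :=
    fun h => h
  have hone : (1 : K) ∈ qcolon R K (toK R K I) (toK R K I) :=
    qmem' (fun y hy => by rwa [one_mul])
  -- b is a nonzerodivisor
  have hbreg : b ∈ nonZeroDivisors R := by
    have hard : a ∈ J.radical := by rw [hJm]; exact ham
    obtain ⟨k, hak⟩ := hard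
    rw [mem_nonZeroDivisors_iff_right]
    intro x hx
    have h2 : a ^ k * a ^ k ∈ J ^ 2 := by
      rw [pow_two]
      exact Ideal.mul_mem_mul hak hak
    rw [hred] at h2
    have h3 : a ^ k * a ^ k ∈ Ideal.span {b} := Ideal.mul_le_left h2
    obtain ⟨s, hs⟩ := Ideal.mem_span_singleton'.mp h3
    have h4 : x * (a ^ k * a ^ k) = 0 := by
      rw [← hs, show x * (s * b) = s * (x * b) by ring, hx, mul_zero]
    have h5 : a ^ k * a ^ k ∈ nonZeroDivisors R :=
      mul_mem (pow_mem hareg k) (pow_mem hareg k)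
    exact mem_nonZeroDivisors_iff_right.mp h5 x h4
  have hu : IsUnit (algebraMap R K b) :=
    IsLocalization.map_units (M := nonZeroDivisors R) K ⟨b, hbreg⟩
  have hbv : algebraMap R K b * ↑hu.unit⁻¹ = 1 := IsUnit.mul_val_inv hu
  -- key decomposition via Condition (C)
  have hdec : ∀ x, x ∈ J → ∃ (r : R) (c : Fin t → R) (g : Fin t → K),
      (∀ i, b * c i ∈ I) ∧ (∀ i, g i ∈ qcolon R K (toK R K I) (toK R K I)) ∧
      algebraMap R K x = algebraMap R K (b * r) + ∑ i, algebraMap R K (b * c i) * g i := by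
    intro x hx
    set z : K := algebraMap R K x * ↑hu.unit⁻¹ with hz
    have hbz : algebraMap R K b * z = algebraMap R K x := by
      rw [hz, show algebraMap R K b * (algebraMap R K x * ↑hu.unit⁻¹)
        = algebraMap R K x * (algebraMap R K b * ↑hu.unit⁻¹) by ring, hbv, mul_one]
    have hzA : z ∈ qcolon R K (toK R K I) (toK R K I) := by
      rw [hAR]
      refine qmem' ?_
      intro y hy
      obtain ⟨i0, hi0, rfl⟩ := hy
      have hxi : x * i0 ∈ Ideal.span {b} := by
        have h1 : x * i0 ∈ J ^ 2 := by
          rw [pow_two]; exact Ideal.mul_mem_mul hx (hIJ.le hi0)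
        rw [hred] at h1
        exact Ideal.mul_le_left h1
      obtain ⟨s, hs⟩ := Ideal.mem_span_singleton'.mp hxi
      have hzi : z * (Algebra.linearMap R K) i0 = algebraMap R K s := by
        show z * algebraMap R K i0 = algebraMap R K s
        calc z * algebraMap R K i0
            = (algebraMap R K x * algebraMap R K i0) * ↑hu.unit⁻¹ := by rw [hz]; ring
          _ = (algebraMap R K s * algebraMap R K b) * ↑hu.unit⁻¹ := by
              rw [← map_mul, ← map_mul, ← hs, mul_comm s b]
          _ = algebraMap R K s * (algebraMap R K b * ↑hu.unit⁻¹) := by ring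
          _ = algebraMap R K s := by rw [hbv, mul_one]
      rw [hzi]
      exact mem_toK ⊤ s trivial
    set zz : ↥(qcolon R K (toK R K I) (toK R K I)) := ⟨z, hzA⟩ with hzz
    set Acm := Submodule.comap (qcolon R K (toK R K I) (toK R K I)).subtype
      (toK R K (⊤ : Ideal R)) with hAcm
    have hmkz : Submodule.Quotient.mk (p := Acm) (b • zz) = 0 := by
      rw [Submodule.Quotient.mk_eq_zero]
      show (↑(b • zz) : K) ∈ toK R K (⊤ : Ideal R)
      have hco : ((b • zz : ↥(qcolon R K (toK R K I) (toK R K I))) : K)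
          = algebraMap R K b * z := by
        rw [SetLike.val_smul]
        exact Algebra.smul_def b z
      rw [hco, hbz]
      exact mem_toK ⊤ x trivial
    set w := φ (Submodule.Quotient.mk zz) with hw
    have hbw : b • w = 0 := by
      rw [hw, ← map_smul, ← Submodule.Quotient.mk_smul, hmkz, map_zero]
    have hcex : ∀ i, ∃ ci : R, Submodule.Quotient.mk ci = w i :=
      fun i => Submodule.Quotient.mk_surjective I (w i)
    choose c hc using hcex
    have hbc : ∀ i, b * c i ∈ I := by
      intro i
      have h1 : (b • w) i = 0 := by rw [hbw]; rfl
      rw [Pi.smul_apply, ← hc i, ← Submodule.Quotient.mk_smul] at h1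
      have := (Submodule.Quotient.mk_eq_zero I).mp h1
      simpa [smul_eq_mul] using this
    have hsum : Submodule.Quotient.mk (p := Acm) zz = ∑ i, c i • φ.symm (Pi.single i 1) := by
      apply φ.injective
      rw [map_sum]
      simp only [map_smul, LinearEquiv.apply_symm_apply]
      rw [← hw]
      ext j
      rw [Finset.sum_apply]
      simp only [Pi.smul_apply, Pi.single_apply, smul_ite, smul_zero, Finset.sum_ite_eq,
        Finset.mem_univ, if_true]
      rw [← hc j]
      rw [show (1 : R ⧸ I) = Submodule.Quotient.mk 1 from rfl, ← Submodule.Quotient.mk_smul,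
        smul_eq_mul, mul_one]
    have hgex : ∀ i, ∃ gg : ↥(qcolon R K (toK R K I) (toK R K I)),
        Submodule.Quotient.mk (p := Acm) gg = φ.symm (Pi.single i 1) :=
      fun i => Submodule.Quotient.mk_surjective Acm _
    choose G hG using hgex
    have hker0 : Acm.mkQ (zz - ∑ i, c i • G i) = 0 := by
      rw [map_sub, map_sum]
      simp only [map_smul, Submodule.mkQ_apply]
      simp only [hG]
      rw [hsum]
      exact sub_self _
    have hker : zz - ∑ i, c i • G i ∈ Acm := by
      rwa [Submodule.mkQ_apply, Submodule.Quotient.mk_eq_zero] at hker0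
    obtain ⟨r, -, hr⟩ := hker
    refine ⟨r, c, fun i => (G i : K), hbc, fun i => (G i).2, ?_⟩
    have hcoe : ((zz - ∑ i, c i • G i : ↥(qcolon R K (toK R K I) (toK R K I))) : K)
        = z - ∑ i, (c i : R) • (G i : K) := by
      rw [AddSubgroupClass.coe_sub]
      congr 1
      rw [AddSubmonoidClass.coe_finset_sum]
      exact Finset.sum_congr rfl fun i _ => by rw [SetLike.val_smul]
    have hr' : algebraMap R K r = z - ∑ i, (c i : R) • (G i : K) := by
      rw [← hcoe]; exact hr
    have hzdec : z = algebraMap R K r + ∑ i, (c i : R) • (G i : K) := by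
      rw [hr']; ring
    rw [← hbz, hzdec, mul_add, Finset.mul_sum]
    congr 1
    · rw [map_mul]
    · refine Finset.sum_congr rfl fun i _ => ?_
      rw [Algebra.smul_def, map_mul]
      ring
  have hSI : ∀ (c : Fin t → R) (g : Fin t → K), (∀ i, b * c i ∈ I) →
      (∀ i, g i ∈ qcolon R K (toK R K I) (toK R K I)) →
      (∑ i, algebraMap R K (b * c i) * g i) ∈ toK R K I := by
    intro c g hbc hg
    refine Submodule.sum_mem _ fun i _ => ?_
    have := qmem (hg i) (algebraMap R K (b * c i)) (mem_toK I _ (hbc i))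
    rwa [mul_comm] at this
  -- J = I + (b)
  have hJ' : J = I ⊔ Ideal.span {b} := by
    apply le_antisymm
    · intro x hx
      obtain ⟨r, c, g, hbc, hgA, hxid⟩ := hdec x hx
      have hS : (∑ i, algebraMap R K (b * c i) * g i) ∈ toK R K I := hSI c g hbc hgA
      have hsub : algebraMap R K (x - b * r) ∈ toK R K I := by
        rw [map_sub]
        have heq : algebraMap R K x - algebraMap R K (b * r)
            = ∑ i, algebraMap R K (b * c i) * g i := by rw [hxid]; ring
        rw [heq]; exact hS
      have hxbr : x - b * r ∈ I := toK_mem I _ hsub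
      have hxeq : x = (x - b * r) + b * r := by ring
      rw [hxeq]
      exact Submodule.add_mem _ (Ideal.mem_sup_left hxbr)
        (Ideal.mem_sup_right (Ideal.mem_span_singleton'.mpr ⟨r, mul_comm r b⟩))
    · refine sup_le hIJ.le ?_
      rw [Ideal.span_le, Set.singleton_subset_iff]
      exact hb
  have hcolmem : ∀ x : R, x ∈ Submodule.colon I J ↔ b * x ∈ I := by
    intro x
    constructor
    · intro hx
      have := Submodule.mem_colon.mp hx b hb
      rwa [smul_eq_mul, mul_comm] at this
    · intro hbx
      rw [Submodule.mem_colon]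
      intro p hp
      rw [hJ'] at hp
      obtain ⟨i0, hi0, ww, hww, rfl⟩ := Submodule.mem_sup.mp hp
      obtain ⟨s, hs⟩ := Ideal.mem_span_singleton'.mp hww
      rw [smul_eq_mul, mul_add]
      refine I.add_mem (I.mul_mem_left x hi0) ?_
      rw [← hs, show x * (s * b) = s * (b * x) by ring]
      exact I.mul_mem_left s hbx
  have hIcol : I ≤ Submodule.colon I J := fun x hx => (hcolmem x).mpr (I.mul_mem_left b hx)
  refine ⟨?_, ?_, ?_⟩
  · -- Part (1)
    apply le_antisymm
    · intro u hu
      obtain ⟨hu1, hu2⟩ := Submodule.mem_inf.mp hu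
      obtain ⟨x, -, rfl⟩ := hu2
      have hxb : (Algebra.linearMap R K) x * algebraMap R K b ∈ toK R K I :=
        qmem hu1 (algebraMap R K b) (mem_toK _ b (Ideal.mem_span_singleton_self b))
      have hxb' : algebraMap R K (x * b) ∈ toK R K I := by rw [map_mul]; exact hxb
      have hxbI : x * b ∈ I := toK_mem I _ hxb'
      exact mem_toK _ x ((hcolmem x).mpr (by rwa [mul_comm] at hxbI))
    · intro u hu
      obtain ⟨x, hx, rfl⟩ := hu
      refine Submodule.mem_inf.mpr ⟨?_, mem_toK ⊤ x trivial⟩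
      refine qmem' ?_
      intro y hy
      obtain ⟨ww, hww, rfl⟩ := hy
      obtain ⟨s, hs⟩ := Ideal.mem_span_singleton'.mp hww
      have hxw : x * ww ∈ I := by
        rw [← hs, show x * (s * b) = s * (b * x) by ring]
        exact I.mul_mem_left s ((hcolmem x).mp hx)
      have hmm : (Algebra.linearMap R K) x * (Algebra.linearMap R K) ww
          = algebraMap R K (x * ww) := (map_mul (algebraMap R K) x ww).symm
      rw [hmm]
      exact mem_toK _ _ hxw
  · -- Part (2): lengths
    set C := Submodule.colon I J with hCdef
    set f : R →ₗ[R] R ⧸ I := I.mkQ.comp ((LinearMap.lsmul R R) b) with hfdef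
    have hfapp : ∀ x : R, f x = Submodule.Quotient.mk (b * x) := fun x => rfl
    have hker : LinearMap.ker f = C := by
      ext x
      rw [LinearMap.mem_ker, hfapp, Submodule.Quotient.mk_eq_zero]
      exact (hcolmem x).symm
    have hrange : LinearMap.range f = Submodule.map I.mkQ J := by
      ext u
      constructor
      · rintro ⟨x, rfl⟩
        exact ⟨b * x, J.mul_mem_right x hb, rfl⟩
      · rintro ⟨j, hj, rfl⟩
        rw [hJ'] at hj
        obtain ⟨i0, hi0, ww, hww, rfl⟩ := Submodule.mem_sup.mp hj
        obtain ⟨s, hs⟩ := Ideal.mem_span_singleton'.mp hww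
        refine ⟨s, ?_⟩
        rw [hfapp, Submodule.mkQ_apply, Submodule.Quotient.eq]
        have hdiff : b * s - (i0 + ww) = -i0 := by rw [← hs]; ring
        rw [hdiff]
        exact I.neg_mem hi0
    have hIC : I ≤ C := hIcol
    have e1 : rlength R (R ⧸ C) = rlength R ↥(LinearMap.range f) := by
      rw [← hker]
      exact rlength_congr (LinearMap.quotKerEquivRange f)
    have e2 : rlength R ((R ⧸ I) ⧸ (LinearMap.range f)) = rlength R (R ⧸ J) := by
      rw [hrange]
      exact rlength_congr (Submodule.quotientQuotientEquivQuotient I J hIJ.le)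
    set g : ↥C →ₗ[R] R ⧸ I := I.mkQ.comp C.subtype with hgdef
    have hkerg : LinearMap.ker g = Submodule.comap C.subtype I := by
      ext x
      rw [LinearMap.mem_ker]
      show Submodule.Quotient.mk (C.subtype x) = 0 ↔ _
      rw [Submodule.Quotient.mk_eq_zero]
      exact Iff.rfl
    have hrangeg : LinearMap.range g = Submodule.map I.mkQ C := by
      rw [hgdef, LinearMap.range_comp, Submodule.range_subtype]
    have e3 : rlength R (↥C ⧸ Submodule.comap C.subtype I)
        = rlength R ↥(Submodule.map I.mkQ C) := by
      rw [← hkerg, ← hrangeg]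
      exact rlength_congr (LinearMap.quotKerEquivRange g)
    have e4 : rlength R ((R ⧸ I) ⧸ (Submodule.map I.mkQ C)) = rlength R (R ⧸ C) :=
      rlength_congr (Submodule.quotientQuotientEquivQuotient I C hIC)
    have A1 : rlength R (R ⧸ I) = rlength R (R ⧸ J) + rlength R (R ⧸ C) := by
      rw [rlength_add (LinearMap.range f), e2, ← e1]
    have A2 : rlength R (R ⧸ I)
        = rlength R (R ⧸ C) + rlength R (↥C ⧸ Submodule.comap C.subtype I) := by
      rw [rlength_add (Submodule.map I.mkQ C), e4, ← e3]
    have hfin : rlength R (R ⧸ C) ≠ ⊤ := by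
      obtain ⟨n, hn⟩ := Ideal.exists_radical_pow_le_of_fg I
        (by rw [hIrad]; exact IsNoetherian.noetherian _)
      rw [hIrad] at hn
      have hmax : ((⊥ : Ideal R).jacobson).IsMaximal := by
        rw [IsLocalRing.jacobson_eq_maximalIdeal ⊥ bot_ne_top]
        exact IsLocalRing.maximalIdeal.isMaximal R
      haveI hart : IsArtinian R (R ⧸ C) :=
        isArtinian_of_jacobson_pow hmax n C (hn.trans hIC)
      exact rlength_ne_top_of_finiteLength
        (isFiniteLength_iff_isNoetherian_isArtinian.mpr ⟨inferInstance, hart⟩)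
    have hcomb := A1.symm.trans A2
    rw [add_comm (rlength R (R ⧸ C))] at hcomb
    exact (wb_cancel rlength_ne_bot hfin hcomb).symm
  · -- Part (3)
    apply le_antisymm
    · intro u hu
      obtain ⟨x, hxI, rfl⟩ := hu
      obtain ⟨r, c, g, hbc, hgA, hxid⟩ := hdec x (hIJ.le hxI)
      have hS : (∑ i, algebraMap R K (b * c i) * g i) ∈ toK R K I := hSI c g hbc hgA
      have hbrI : b * r ∈ I := by
        have hmem : algebraMap R K (b * r) ∈ toK R K I := by
          have heq : algebraMap R K (b * r)
              = algebraMap R K x - ∑ i, algebraMap R K (b * c i) * g i := by rw [hxid]; ring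
          rw [heq]
          exact Submodule.sub_mem _ (mem_toK I x hxI) hS
        exact toK_mem I _ hmem
      have hrC : r ∈ Submodule.colon I J := (hcolmem r).mpr hbrI
      have hcC : ∀ i, c i ∈ Submodule.colon I J := fun i => (hcolmem (c i)).mpr (hbc i)
      show (Algebra.linearMap R K) x ∈ _
      have hlin : (Algebra.linearMap R K) x = algebraMap R K x := rfl
      rw [hlin, hxid]
      refine Submodule.add_mem _ ?_ (Submodule.sum_mem _ fun i _ => ?_)
      · have hm : b * r ∈ Ideal.span {b} * Submodule.colon I J :=
          Ideal.mul_mem_mul (Ideal.mem_span_singleton_self b) hrC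
        have := Submodule.mul_mem_mul (mem_toK _ _ hm) hone
        simpa using this
      · have hm : b * c i ∈ Ideal.span {b} * Submodule.colon I J :=
          Ideal.mul_mem_mul (Ideal.mem_span_singleton_self b) (hcC i)
        exact Submodule.mul_mem_mul (mem_toK _ _ hm) (hgA i)
    · rw [Submodule.mul_le]
      intro u hu a' ha'
      obtain ⟨ww, hww, rfl⟩ := hu
      have hwI : ww ∈ I := by
        have hle : Ideal.span {b} * Submodule.colon I J ≤ I := by
          rw [Ideal.mul_le]
          intro p hp q hq
          obtain ⟨s, hs⟩ := Ideal.mem_span_singleton'.mp hp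
          rw [← hs, show s * b * q = s * (b * q) by ring]
          exact I.mul_mem_left s ((hcolmem q).mp hq)
        exact hle hww
      have := qmem ha' _ (mem_toK I ww hwI)
      rwa [mul_comm] at this
end

section
/- Let I be an Ulrich ideal of R with A = I : I, and let a₁, …, aₙ ∈ m (n ≥ 2) with I = a₁a₂⋯aₙA. Setting I_i = (a₁⋯a_i) + I for 1 ≤ i ≤ n, each I_i is an Ulrich ideal of R, and I = I_n ⊊ I_{n−1} ⊊ ⋯ ⊊ I₁. -/
set_option synthInstance.maxHeartbeats 1000000
set_option maxHeartbeats 2000000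
set_option linter.unnecessarySimpa false

open IsLocalRing Pointwise

section Helpers
variable {R : Type*} [CommRing R] {K : Type*} [CommRing K] [Algebra R K]

lemma mem_toK' {I : Ideal R} {x : K} :
    x ∈ toK R K I ↔ ∃ r ∈ I, algebraMap R K r = x := by
  constructor
  · rintro ⟨r, hr, rfl⟩; exact ⟨r, hr, rfl⟩
  · rintro ⟨r, hr, rfl⟩; exact ⟨r, hr, rfl⟩

lemma algMap_mem_toK {I : Ideal R} {r : R} (h : r ∈ I) :
    algebraMap R K r ∈ toK R K I := mem_toK'.mpr ⟨r, h, rfl⟩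

lemma mem_qcolon' {X Y : Submodule R K} {z : K} :
    z ∈ qcolon R K X Y ↔ ∀ y ∈ Y, z * y ∈ X := Iff.rfl

lemma mem_psmul {r : R} {S : Submodule R K} {x : K} :
    x ∈ r • S ↔ ∃ z ∈ S, algebraMap R K r * z = x := by
  constructor
  · intro h
    obtain ⟨z, hz, hzz⟩ := Submodule.mem_map.mp h
    exact ⟨z, hz, by rw [← hzz]; simp [Algebra.smul_def]⟩
  · rintro ⟨z, hz, h⟩
    exact Submodule.mem_map.mpr ⟨z, hz, by simpa [Algebra.smul_def] using h⟩

end Helpers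

lemma quot_smul_cot {R : Type*} [CommRing R] (I : Ideal R) (r : R) (v : I.Cotangent) :
    (Ideal.Quotient.mk I r) • v = r • v := rfl

theorem ulrich_step {R : Type*} [CommRing R] [IsLocalRing R] (I : Ideal R) (b c f : R)
    (hfbc : f = b * c) (hfI : f ∈ I)
    (hI2 : I * I ≤ Ideal.span {f} * I)
    (hfm : f ∉ maximalIdeal R * I)
    (hfree : Module.Free (R ⧸ I) I.Cotangent)
    (hcI : c ∉ I) (hIf : I ≠ Ideal.span {f}) :
    Module.Free (R ⧸ (Ideal.span {b} ⊔ I)) (Ideal.span {b} ⊔ I).Cotangent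
    ∧ Ideal.span {b} ≠ Ideal.span {b} ⊔ I
    ∧ (Ideal.span {b} ⊔ I) ^ 2 = Ideal.span {b} * (Ideal.span {b} ⊔ I) := by
  classical
  have hItop : I ≠ ⊤ := fun h => hcI (h ▸ Submodule.mem_top)
  haveI : Nontrivial (R ⧸ I) := Ideal.Quotient.nontrivial_iff.mpr hItop
  haveI : IsLocalRing (R ⧸ I) := .of_surjective' (Ideal.Quotient.mk I) Ideal.Quotient.mk_surjective
  set J := Ideal.span {b} ⊔ I with hJ
  have hIJ : I ≤ J := le_sup_right
  have hbJ : b ∈ J := Ideal.mem_sup_left (Ideal.mem_span_singleton_self b)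
  have hIm : I ≤ maximalIdeal R := le_maximalIdeal hItop
  have hfm' : f ∈ maximalIdeal R := hIm hfI
  have hI2f : I ^ 2 ≤ Ideal.span {f} := by
    rw [pow_two]
    exact le_trans hI2 Ideal.mul_le_left
  have hI2I : I ^ 2 ≤ I := by rw [pow_two]; exact Ideal.mul_le_right
  -- J^2 = b J
  have hfIbJ : Ideal.span {f} * I ≤ Ideal.span {b} * J := by
    refine Ideal.mul_le.mpr fun u hu v hv => ?_
    obtain ⟨d, hd⟩ := Ideal.mem_span_singleton'.mp hu
    have : u * v = b * (d * (c * v)) := by rw [← hd, hfbc]; ring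
    rw [this]
    exact Ideal.mul_mem_mul (Ideal.mem_span_singleton_self b)
      (hIJ (I.mul_mem_left _ (I.mul_mem_left _ hv)))
  have hJ2 : J ^ 2 ≤ Ideal.span {b} * J := by
    rw [pow_two]
    refine Ideal.mul_le.mpr fun u hu v hv => ?_
    rw [hJ] at hu
    obtain ⟨p, z, hzI, hpz⟩ := Ideal.mem_span_singleton_sup.mp hu
    have : u * v = p * (b * v) + z * v := by rw [← hpz]; ring
    rw [this]
    refine Ideal.add_mem _ (Ideal.mul_mem_left _ _
      (Ideal.mul_mem_mul (Ideal.mem_span_singleton_self b) hv)) ?_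
    rw [hJ] at hv
    obtain ⟨q, zw, hzwI, hqz⟩ := Ideal.mem_span_singleton_sup.mp hv
    have : z * v = q * (b * z) + z * zw := by rw [← hqz]; ring
    rw [this]
    refine Ideal.add_mem _ (Ideal.mul_mem_left _ _
      (Ideal.mul_mem_mul (Ideal.mem_span_singleton_self b) (hIJ hzI))) ?_
    exact hfIbJ (hI2 (Ideal.mul_mem_mul hzI hzwI))
  -- basis of I.Cotangent
  obtain ⟨⟨κ, e⟩⟩ := hfree
  set φ : I.Cotangent := I.toCotangent ⟨f, hfI⟩ with hφ
  set σ : _ := e.repr φ with hσ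
  -- lifts of the basis
  have hx : ∀ k : κ, ∃ x : I, I.toCotangent x = e k := fun k => I.toCotangent_surjective (e k)
  choose x he using hx
  -- a unit coordinate
  have hk₀ : ∃ k₀, IsUnit (σ k₀) := by
    by_contra hno
    push_neg at hno
    apply hfm
    have hmax : ∀ k, σ k ∈ maximalIdeal (R ⧸ I) := fun k =>
      (IsLocalRing.mem_maximalIdeal _).mpr (hno k)
    -- lift coordinates into the maximal ideal of R
    have hlift : ∀ k, ∃ μ : R, μ ∈ maximalIdeal R ∧ Ideal.Quotient.mk I μ = σ k := by
      intro k
      obtain ⟨μ, hμ⟩ := Ideal.Quotient.mk_surjective (σ k)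
      refine ⟨μ, ?_, hμ⟩
      have hcm : ((maximalIdeal (R ⧸ I)).comap (Ideal.Quotient.mk I)).IsMaximal :=
        Ideal.comap_isMaximal_of_surjective _ Ideal.Quotient.mk_surjective
      have : (maximalIdeal (R ⧸ I)).comap (Ideal.Quotient.mk I) = maximalIdeal R :=
        eq_maximalIdeal hcm
      rw [← this]
      show Ideal.Quotient.mk I μ ∈ maximalIdeal (R ⧸ I)
      rw [hμ]; exact hmax k
    choose μ hμm hμ using hlift
    -- φ = toCotangent of the combination
    have hcomb : φ = I.toCotangent (∑ k ∈ σ.support, μ k • x k) := by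
      rw [map_sum]
      have : ∀ k ∈ σ.support, I.toCotangent (μ k • x k) = σ k • e k := by
        intro k _
        rw [map_smul, he k, ← hμ k, quot_smul_cot]
      rw [Finset.sum_congr rfl this]
      conv_lhs => rw [← e.linearCombination_repr φ]
      rw [Finsupp.linearCombination_apply, Finsupp.sum]
    have hdiff : f - (∑ k ∈ σ.support, μ k • x k : I) ∈ I ^ 2 := by
      have := I.toCotangent_eq (x := ⟨f, hfI⟩) (y := ∑ k ∈ σ.support, μ k • x k)
      exact this.mp hcomb
    have hsum_mem : ((∑ k ∈ σ.support, μ k • x k : I) : R) ∈ maximalIdeal R * I := by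
      rw [Submodule.coe_sum]
      refine Submodule.sum_mem _ fun k _ => ?_
      have : ((μ k • x k : I) : R) = μ k * (x k : R) := rfl
      rw [this]
      exact Ideal.mul_mem_mul (hμm k) (x k).2
    have hf2 : f ∈ maximalIdeal R * I ⊔ I ^ 2 := by
      have : f = (∑ k ∈ σ.support, μ k • x k : I) + (f - (∑ k ∈ σ.support, μ k • x k : I)) := by
        ring
      rw [this]
      exact Ideal.add_mem _ (Ideal.mem_sup_left hsum_mem) (Ideal.mem_sup_right hdiff)
    have : I ^ 2 ≤ maximalIdeal R * I := by
      rw [pow_two]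
      exact le_trans hI2 (Ideal.mul_mono_left ((Ideal.span_singleton_le_iff_mem _).mpr hfm'))
    exact (sup_le le_rfl this) hf2
  obtain ⟨k₀, hu⟩ := hk₀
  -- KF1 : coefficient extraction
  have KF1 : ∀ (r₀ : R) (s : Finset κ), k₀ ∉ s → ∀ g : κ → R,
      r₀ * f + (∑ k ∈ s, g k * (x k : R)) ∈ I ^ 2 → r₀ ∈ I ∧ ∀ k ∈ s, g k ∈ I := by
    intro r₀ s hk₀s g hrel
    have hmem : r₀ * f + (∑ k ∈ s, g k * (x k : R)) ∈ I :=
      I.add_mem (I.mul_mem_left _ hfI)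
        (Submodule.sum_mem _ fun k _ => I.mul_mem_left _ (x k).2)
    have hξ : I.toCotangent ⟨r₀ * f + (∑ k ∈ s, g k * (x k : R)), hmem⟩ = 0 :=
      (I.toCotangent_eq_zero _).mpr hrel
    have hξ' : (⟨r₀ * f + (∑ k ∈ s, g k * (x k : R)), hmem⟩ : I)
        = r₀ • (⟨f, hfI⟩ : I) + ∑ k ∈ s, g k • x k := by
      apply Subtype.ext
      push_cast [Submodule.coe_sum]
      rfl
    rw [hξ', map_add, map_smul, map_sum] at hξ
    have hξ2 : r₀ • φ + ∑ k ∈ s, g k • e k = 0 := by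
      rw [← hξ]
      congr 1
      exact Finset.sum_congr rfl fun k _ => by rw [map_smul, he k]
    -- move to coordinates
    have hrepr : (Ideal.Quotient.mk I r₀) • σ
        + ∑ k ∈ s, (Ideal.Quotient.mk I (g k)) • Finsupp.single k (1 : R ⧸ I) = 0 := by
      have := congrArg e.repr hξ2
      rw [map_add, map_sum, map_zero] at this
      rw [← this]
      congr 1
      · rw [← quot_smul_cot I r₀ φ, map_smul, hσ]
      · exact Finset.sum_congr rfl fun k _ => by
          rw [← quot_smul_cot I (g k) (e k), map_smul, e.repr_self]
    have hval : ∀ j : κ, (Ideal.Quotient.mk I r₀) * σ j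
        + ∑ k ∈ s, (Ideal.Quotient.mk I (g k)) * (Finsupp.single k (1 : R ⧸ I)) j = 0 := by
      intro j
      have := DFunLike.congr_fun hrepr j
      simpa only [Finsupp.add_apply, Finsupp.smul_apply, Finset.sum_apply', smul_eq_mul,
        Finsupp.coe_zero, Pi.zero_apply] using this
    have hr₀ : Ideal.Quotient.mk I r₀ = 0 := by
      have h0 := hval k₀
      rw [Finset.sum_eq_zero (fun k hk => by
        rw [Finsupp.single_apply, if_neg (fun h : k = k₀ => hk₀s (by rwa [h] at hk)), mul_zero]),
        add_zero] at h0
      exact (hu.mul_left_eq_zero).mp h0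
    constructor
    · exact (Ideal.Quotient.eq_zero_iff_mem).mp hr₀
    · intro k hk
      have h0 := hval k
      rw [hr₀, zero_mul, zero_add] at h0
      rw [Finset.sum_eq_single k (fun k' _ hk' => by
          rw [Finsupp.single_apply, if_neg hk', mul_zero])
        (fun h => absurd hk h)] at h0
      rw [Finsupp.single_apply, if_pos rfl, mul_one] at h0
      exact (Ideal.Quotient.eq_zero_iff_mem).mp h0
  -- KEY LEMMA
  have KEY : ∀ t : R, c * t ∈ I → t ∈ J := by
    intro t ht
    have hbv : b • I.toCotangent ⟨c * t, ht⟩ = t • φ := by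
      rw [← map_smul, ← map_smul]
      congr 1
      apply Subtype.ext
      show b * (c * t) = t * f
      rw [hfbc]; ring
    have hco : (Ideal.Quotient.mk I b) * (e.repr (I.toCotangent ⟨c * t, ht⟩)) k₀
        = (Ideal.Quotient.mk I t) * σ k₀ := by
      have := congrArg (fun v => (e.repr v) k₀) hbv
      simpa only [← quot_smul_cot, map_smul, Finsupp.smul_apply, smul_eq_mul] using this
    -- mk t = mk b * β
    have hσu : σ k₀ * (↑hu.unit⁻¹ : R ⧸ I) = 1 := by
      exact hu.mul_val_inv
    have hmkt : Ideal.Quotient.mk I t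
        = Ideal.Quotient.mk I b * ((e.repr (I.toCotangent ⟨c * t, ht⟩)) k₀ * (↑hu.unit⁻¹ : R ⧸ I)) := by
      have h1 : (Ideal.Quotient.mk I t) * (σ k₀ * (↑hu.unit⁻¹ : R ⧸ I))
          = Ideal.Quotient.mk I b * ((e.repr (I.toCotangent ⟨c * t, ht⟩)) k₀ * (↑hu.unit⁻¹ : R ⧸ I)) := by
        rw [← mul_assoc, ← mul_assoc, hco]
      rwa [hσu, mul_one] at h1
    obtain ⟨t', ht'⟩ := Ideal.Quotient.mk_surjective
      ((e.repr (I.toCotangent ⟨c * t, ht⟩)) k₀ * (↑hu.unit⁻¹ : R ⧸ I))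
    rw [← ht', ← map_mul, Ideal.Quotient.eq] at hmkt
    rw [hJ]
    exact Ideal.mem_span_singleton_sup.mpr ⟨t', t - b * t', hmkt, by ring⟩

  -- the generating family of J.Cotangent
  have hwmem : ∀ k : κ, (if k = k₀ then b else (x k : R)) ∈ J := by
    intro k
    split
    · exact hbJ
    · exact hIJ (x k).2
  set w : κ → J.Cotangent := fun k => J.toCotangent ⟨if k = k₀ then b else (x k : R), hwmem k⟩
    with hw
  have hwk₀ : w k₀ = J.toCotangent ⟨b, hbJ⟩ := by
    have h1 : w k₀ = J.toCotangent ⟨if k₀ = k₀ then b else (x k₀ : R), hwmem k₀⟩ := rfl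
    rw [h1]
    exact congrArg _ (Subtype.ext (if_pos rfl))
  have hwk : ∀ k, k ≠ k₀ → w k = J.toCotangent ⟨(x k : R), hIJ (x k).2⟩ := by
    intro k hk
    have h1 : w k = J.toCotangent ⟨if k = k₀ then b else (x k : R), hwmem k⟩ := rfl
    rw [h1]
    exact congrArg _ (Subtype.ext (if_neg hk))
  -- linear independence of w over R ⧸ J
  have hli : LinearIndependent (R ⧸ J) w := by
    rw [linearIndependent_iff']
    intro s g hrel i hi
    have hg : ∀ k, ∃ g' : R, Ideal.Quotient.mk J g' = g k := fun k =>
      Ideal.Quotient.mk_surjective _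
    choose g' hg' using hg
    -- the underlying relation in R
    have hrel2 : (∑ k ∈ s, g' k * (if k = k₀ then b else (x k : R))) ∈ J ^ 2 := by
      apply (J.toCotangent_eq_zero ⟨∑ k ∈ s, g' k * (if k = k₀ then b else (x k : R)),
        Submodule.sum_mem _ fun k _ => J.mul_mem_left _ (hwmem k)⟩).mp
      have h2 : (⟨∑ k ∈ s, g' k * (if k = k₀ then b else (x k : R)), Submodule.sum_mem _
            fun k _ => J.mul_mem_left _ (hwmem k)⟩ : J)
          = ∑ k ∈ s, g' k • (⟨if k = k₀ then b else (x k : R), hwmem k⟩ : J) := by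
        apply Subtype.ext
        rw [Submodule.coe_sum]
        exact Finset.sum_congr rfl fun k _ => rfl
      rw [h2, map_sum, ← hrel]
      exact Finset.sum_congr rfl fun k _ => by
        rw [map_smul, ← hg' k, quot_smul_cot]
    have hbh : (∑ k ∈ s, g' k * (if k = k₀ then b else (x k : R))) ∈ Ideal.span {b} * J :=
      hJ2 hrel2
    obtain ⟨j, hjJ, hbj⟩ := Ideal.mem_span_singleton_mul.mp hbh
    rw [hJ] at hjJ
    obtain ⟨p, q, hqI, hpq⟩ := Ideal.mem_span_singleton_sup.mp hjJ
    set s' := s.erase k₀ with hs'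
    set r : R := if k₀ ∈ s then g' k₀ else 0 with hr
    have hsplit : (∑ k ∈ s, g' k * (if k = k₀ then b else (x k : R)))
        = r * b + ∑ k ∈ s', g' k * (x k : R) := by
      have hsum' : (∑ k ∈ s', g' k * (if k = k₀ then b else (x k : R)))
          = ∑ k ∈ s', g' k * (x k : R) :=
        Finset.sum_congr rfl fun k hk => by rw [if_neg (Finset.ne_of_mem_erase hk)]
      by_cases hks : k₀ ∈ s
      · rw [hr, if_pos hks, ← Finset.add_sum_erase s _ hks, if_pos rfl, ← hs', hsum']
      · rw [hr, if_neg hks, zero_mul, zero_add, hs', Finset.erase_eq_of_notMem hks]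
        exact Finset.sum_congr rfl fun k hk => by
          rw [if_neg (fun h : k = k₀ => hks (by rwa [h] at hk))]
    set G : R := r - p * b - q with hG
    have hSig : (∑ k ∈ s', g' k * (x k : R)) = b * (p * b + q) - r * b := by
      rw [hpq, hbj, hsplit]; ring
    have hGf : G * f + ∑ k ∈ s', (c * g' k) * (x k : R) = 0 := by
      have : (∑ k ∈ s', (c * g' k) * (x k : R)) = c * ∑ k ∈ s', g' k * (x k : R) := by
        rw [Finset.mul_sum]
        exact Finset.sum_congr rfl fun k _ => by ring
      rw [this, hSig, hG, hfbc]; ring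
    have hKF := KF1 G s' (Finset.notMem_erase _ _) (fun k => c * g' k)
      (by rw [hGf]; exact Ideal.zero_mem _)
    -- conclude
    by_cases hik : i = k₀
    · have hks : k₀ ∈ s := hik ▸ hi
      have hgr : g' i = G + p * b + q := by rw [hG, hr, if_pos hks, hik]; ring
      have hgJ : g' i ∈ J := by
        rw [hgr]
        refine Ideal.add_mem _ (Ideal.add_mem _ (hIJ hKF.1) ?_) (hIJ hqI)
        exact Ideal.mem_sup_left (Ideal.mul_mem_left _ p (Ideal.mem_span_singleton_self b))
      rw [← hg' i]
      rwa [Ideal.Quotient.eq_zero_iff_mem]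
    · have hcg : c * g' i ∈ I := hKF.2 i (Finset.mem_erase.mpr ⟨hik, hi⟩)
      have : g' i ∈ J := KEY (g' i) (hcg)
      rw [← hg' i]
      rwa [Ideal.Quotient.eq_zero_iff_mem]
  -- span
  have hGtop : Submodule.span (R ⧸ I) (insert φ (e '' {k | k ≠ k₀})) = ⊤ := by
    apply le_antisymm le_top
    rw [← e.span_eq]
    refine Submodule.span_le.mpr ?_
    rintro _ ⟨k, rfl⟩
    by_cases hk : k = k₀
    · rw [hk]
      have hsupp : k₀ ∈ σ.support := Finsupp.mem_support_iff.mpr hu.ne_zero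
      have h1 : σ k₀ • e k₀ + ∑ i ∈ σ.support.erase k₀, σ i • e i = φ := by
        rw [Finset.add_sum_erase σ.support (fun i => σ i • e i) hsupp]
        conv_rhs => rw [← e.linearCombination_repr φ]
        rw [Finsupp.linearCombination_apply, Finsupp.sum]
      have h2 : σ k₀ • e k₀ ∈ Submodule.span (R ⧸ I) (insert φ (e '' {k | k ≠ k₀})) := by
        have : σ k₀ • e k₀ = φ - ∑ i ∈ σ.support.erase k₀, σ i • e i := by
          rw [← h1]; abel
        rw [this]
        refine Submodule.sub_mem _ (Submodule.subset_span (Set.mem_insert _ _)) ?_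
        refine Submodule.sum_mem _ fun i hi => Submodule.smul_mem _ _ ?_
        exact Submodule.subset_span (Set.mem_insert_of_mem _
          ⟨i, Finset.ne_of_mem_erase hi, rfl⟩)
      have : e k₀ = (↑hu.unit⁻¹ : R ⧸ I) • (σ k₀ • e k₀) := by
        rw [smul_smul, hu.val_inv_mul, one_smul]
      rw [this]
      exact Submodule.smul_mem _ _ h2
    · exact Submodule.subset_span (Set.mem_insert_of_mem _ ⟨k, hk, rfl⟩)
  -- the factor map
  have hker : (I • ⊤ : Submodule R I) ≤ LinearMap.ker
      (J.toCotangent ∘ₗ Submodule.inclusion hIJ) := by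
    intro u hu2
    have hu3 : (u : R) ∈ I ^ 2 := by
      have := (Submodule.mem_smul_top_iff I I u).mp hu2
      rwa [Ideal.smul_eq_mul, ← pow_two] at this
    have : (u : R) ∈ J ^ 2 := by
      rw [pow_two] at hu3 ⊢
      exact Ideal.mul_mono hIJ hIJ hu3
    rw [LinearMap.mem_ker, LinearMap.comp_apply]
    exact (J.toCotangent_eq_zero _).mpr this
  set ρbar : I.Cotangent →ₗ[R] J.Cotangent :=
    Submodule.liftQ _ (J.toCotangent ∘ₗ Submodule.inclusion hIJ) hker with hρbar
  have hρ : ∀ u : I, ρbar (I.toCotangent u) = J.toCotangent ⟨(u : R), hIJ u.2⟩ := fun u => rfl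
  have hρW : ∀ v : I.Cotangent, ρbar v ∈ Submodule.span (R ⧸ J) (Set.range w) := by
    intro v
    have hv : v ∈ Submodule.span (R ⧸ I) (insert φ (e '' {k | k ≠ k₀})) := by
      rw [hGtop]; exact Submodule.mem_top
    induction hv using Submodule.span_induction with
    | mem g hg =>
      rcases hg with hg | ⟨k, hk, rfl⟩
      · have : ρbar g = c • J.toCotangent ⟨b, hbJ⟩ := by
          rw [hg, hφ, hρ, ← map_smul]
          congr 1
          apply Subtype.ext
          show f = c * b
          rw [hfbc]; ring
        rw [this, ← quot_smul_cot J c]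
        exact Submodule.smul_mem _ _ (Submodule.subset_span ⟨k₀, hwk₀⟩)
      · rw [← he k, hρ]
        exact Submodule.subset_span ⟨k, hwk k hk⟩
    | zero => rw [map_zero]; exact Submodule.zero_mem _
    | add v₁ v₂ _ _ h₁ h₂ => rw [map_add]; exact Submodule.add_mem _ h₁ h₂
    | smul a v₁ _ h₁ =>
      obtain ⟨a', rfl⟩ := Ideal.Quotient.mk_surjective a
      rw [quot_smul_cot, map_smul, ← quot_smul_cot J a']
      exact Submodule.smul_mem _ _ h₁
  have hsp : ⊤ ≤ Submodule.span (R ⧸ J) (Set.range w) := by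
    rintro v -
    obtain ⟨⟨y, hy⟩, rfl⟩ := J.toCotangent_surjective v
    have hy' : y ∈ Ideal.span {b} ⊔ I := by rw [← hJ]; exact hy
    obtain ⟨p, z, hzI, hpz⟩ := Ideal.mem_span_singleton_sup.mp hy'
    have hdec : J.toCotangent ⟨y, hy⟩
        = p • J.toCotangent ⟨b, hbJ⟩ + ρbar (I.toCotangent ⟨z, hzI⟩) := by
      rw [hρ, ← map_smul, ← map_add]
      congr 1
      apply Subtype.ext
      show y = p * b + z
      rw [← hpz]
    rw [hdec]
    refine Submodule.add_mem _ ?_ (hρW _)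
    rw [← quot_smul_cot J p]
    exact Submodule.smul_mem _ _ (Submodule.subset_span ⟨k₀, hwk₀⟩)
  refine ⟨Module.Free.of_basis (Module.Basis.mk hli hsp), ?_,
    le_antisymm hJ2 (by rw [pow_two]; exact Ideal.mul_mono_left le_sup_left)⟩
  -- the nondegeneracy part
  intro heq
  have hIb : I ≤ Ideal.span {b} := heq ▸ hIJ
  by_cases hex : ∃ k, k ≠ k₀
  · obtain ⟨k, hk⟩ := hex
    obtain ⟨y, hy⟩ := Ideal.mem_span_singleton'.mp (hIb (x k).2)
    have hrel : (-y) * f + ∑ k' ∈ ({k} : Finset κ), c * (x k' : R) = 0 := by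
      rw [Finset.sum_singleton, ← hy, hfbc]; ring
    have := KF1 (-y) {k} (by simpa using fun h => hk h.symm) (fun _ => c)
      (by rw [hrel]; exact Ideal.zero_mem _)
    exact hcI (this.2 k (Finset.mem_singleton_self k))
  · push_neg at hex
    apply hIf
    refine le_antisymm ?_ ((Ideal.span_singleton_le_iff_mem I).mpr hfI)
    intro y hy
    have hrange : Set.range e ⊆ {e k₀} := by
      rintro _ ⟨k, rfl⟩
      rw [hex k]
      exact rfl
    have htop : (⊤ : Submodule (R ⧸ I) I.Cotangent) ≤ Submodule.span (R ⧸ I) {e k₀} := by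
      rw [← e.span_eq]
      exact Submodule.span_mono hrange
    obtain ⟨sc, hsc⟩ := Submodule.mem_span_singleton.mp (htop Submodule.mem_top :
      I.toCotangent ⟨y, hy⟩ ∈ Submodule.span (R ⧸ I) {e k₀})
    have hφk : φ = σ k₀ • e k₀ := by
      conv_lhs => rw [← e.linearCombination_repr φ]
      rw [Finsupp.linearCombination_apply, Finsupp.sum]
      rw [Finset.sum_subset (Finset.subset_iff.mpr fun {i} hi =>
        Finset.mem_singleton.mpr (hex i)) (fun i _ hi =>
          by rw [Finsupp.notMem_support_iff.mp hi, zero_smul])]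
      rw [Finset.sum_singleton]
    have hyc : I.toCotangent ⟨y, hy⟩ = (sc * (↑hu.unit⁻¹ : R ⧸ I)) • φ := by
      rw [hφk, smul_smul, mul_assoc]
      rw [hu.val_inv_mul, mul_one, hsc]
    obtain ⟨s', hs'⟩ := Ideal.Quotient.mk_surjective (sc * (↑hu.unit⁻¹ : R ⧸ I))
    have hyc2 : I.toCotangent ⟨y, hy⟩ = I.toCotangent (s' • ⟨f, hfI⟩) := by
      rw [map_smul, ← quot_smul_cot I s', hs', hyc, hφ]
    have hy2 : y - s' * f ∈ I ^ 2 := by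
      have := I.toCotangent_eq.mp hyc2
      simpa using this
    have : y - s' * f ∈ Ideal.span {f} := hI2f hy2
    have : y = s' * f + (y - s' * f) := by ring
    rw [this]
    exact Ideal.add_mem _ (Ideal.mul_mem_left _ _ (Ideal.mem_span_singleton_self f))
      (hI2f hy2)


theorem stmt13 (R : Type*) [CommRing R] [IsOneDimCMLocal R]
    (K : Type*) [CommRing K] [Algebra R K] [IsFractionRing R K]
    (I : Ideal R) (hI : IsUlrich R I)
    (n : ℕ) (hn : 2 ≤ n) (a : ℕ → R)
    (ha : ∀ i, 1 ≤ i → i ≤ n → a i ∈ (⊥ : Ideal R).jacobson)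
    (hprod : toK R K I =
      (∏ j ∈ Finset.Icc 1 n, a j) • qcolon R K (toK R K I) (toK R K I)) :
    (∀ i, 1 ≤ i → i ≤ n →
      IsUlrich R (Ideal.span {∏ j ∈ Finset.Icc 1 i, a j} ⊔ I)) ∧
    (Ideal.span {∏ j ∈ Finset.Icc 1 n, a j} ⊔ I) = I ∧
    (∀ i, 1 ≤ i → i < n →
      (Ideal.span {∏ j ∈ Finset.Icc 1 (i + 1), a j} ⊔ I) <
        (Ideal.span {∏ j ∈ Finset.Icc 1 i, a j} ⊔ I)) := by
  classical
  haveI hLoc : IsLocalRing R := IsOneDimCMLocal.local_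
  haveI hNoeth : IsNoetherianRing R := IsOneDimCMLocal.noeth
  obtain ⟨hrad, hItop, a₀, ha₀I, ha₀ne, ha₀red, hfree⟩ := hI
  have hmmax : (⊥ : Ideal R).jacobson = maximalIdeal R :=
    jacobson_eq_maximalIdeal ⊥ bot_ne_top
  set A : Submodule R K := qcolon R K (toK R K I) (toK R K I) with hA
  set f : R := ∏ j ∈ Finset.Icc 1 n, a j with hf
  have inj : Function.Injective (algebraMap R K) :=
    IsLocalization.injective K (le_refl (nonZeroDivisors R))
  -- basic facts about A
  have hA1 : (1 : K) ∈ A := by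
    intro y hy; rwa [one_mul]
  have hAmul : ∀ z w : K, z ∈ A → w ∈ A → z * w ∈ A := by
    intro z w hz hw y hy
    rw [mul_assoc]
    exact hz _ (hw y hy)
  -- a nonzerodivisor inside I
  obtain ⟨d₀, hd₀m, hd₀nzd⟩ := IsOneDimCMLocal.depth_pos (R := R)
  have hd₀rad : d₀ ∈ I.radical := by rw [hrad]; exact hd₀m
  obtain ⟨k₁, hg₀⟩ := hd₀rad
  have hg₀nzd : d₀ ^ k₁ ∈ nonZeroDivisors R := pow_mem hd₀nzd k₁
  -- Icc/Ioc bookkeeping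
  have hIcc : ∀ k : ℕ, Finset.Icc 1 k = Finset.Ioc 0 k := by
    intro k; ext z; simp [Nat.lt_iff_add_one_le]
  have hsplit : ∀ i : ℕ, i ≤ n →
      (∏ j ∈ Finset.Icc 1 i, a j) * (∏ j ∈ Finset.Ioc i n, a j) = f := by
    intro i hi
    rw [hf, hIcc, hIcc]
    exact Finset.prod_Ioc_consecutive _ (Nat.zero_le i) hi
  have hbm : ∀ i : ℕ, 1 ≤ i → i ≤ n →
      (∏ j ∈ Finset.Icc 1 i, a j) ∈ (⊥ : Ideal R).jacobson := by
    intro i h1 h2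
    have hmem : (1 : ℕ) ∈ Finset.Icc 1 i := Finset.mem_Icc.mpr ⟨le_refl _, h1⟩
    rw [← Finset.mul_prod_erase _ _ hmem]
    exact Ideal.mul_mem_right _ _ (ha 1 le_rfl (le_trans h1 h2))
  have hcm : ∀ i : ℕ, i < n → (∏ j ∈ Finset.Ioc i n, a j) ∈ (⊥ : Ideal R).jacobson := by
    intro i hilt
    have hmem : i + 1 ∈ Finset.Ioc i n := Finset.mem_Ioc.mpr ⟨Nat.lt_succ_self i, hilt⟩
    rw [← Finset.mul_prod_erase _ _ hmem]
    exact Ideal.mul_mem_right _ _ (ha (i + 1) (Nat.le_add_left 1 i) hilt)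
  -- f ∈ I
  have hfI : f ∈ I := by
    have h1 : algebraMap R K f ∈ toK R K I := by
      rw [hprod]
      exact mem_psmul.mpr ⟨1, hA1, by rw [mul_one]⟩
    obtain ⟨r, hr, hr2⟩ := mem_toK'.mp h1
    rwa [← inj hr2]
  -- f is a nonzerodivisor
  have hfnzd : f ∈ nonZeroDivisors R := by
    rw [mem_nonZeroDivisors_iff_right]
    intro y hy
    have h1 : algebraMap R K (d₀ ^ k₁) ∈ toK R K I := algMap_mem_toK hg₀
    rw [hprod] at h1
    obtain ⟨z, hzA, hzz⟩ := mem_psmul.mp h1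
    have h2 : algebraMap R K (y * d₀ ^ k₁) = 0 := by
      rw [map_mul, ← hzz, ← mul_assoc, mul_comm (algebraMap R K y), ← map_mul,
        mul_comm f y, hy, map_zero, zero_mul]
    have h3 : y * d₀ ^ k₁ = 0 := by
      apply inj; rw [h2, map_zero]
    exact (mem_nonZeroDivisors_iff_right.mp hg₀nzd) y h3
  have hcan : ∀ u v : R, u * f = v * f → u = v := by
    intro u v huv
    have h1 : (u - v) * f = 0 := by rw [sub_mul, huv, sub_self]
    have h2 := (mem_nonZeroDivisors_iff_right.mp hfnzd) _ h1
    exact sub_eq_zero.mp h2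
  have hbnzd : ∀ i : ℕ, i ≤ n → (∏ j ∈ Finset.Icc 1 i, a j) ∈ nonZeroDivisors R := by
    intro i hi
    rw [mem_nonZeroDivisors_iff_right]
    intro y hy
    refine (mem_nonZeroDivisors_iff_right.mp hfnzd) y ?_
    rw [← hsplit i hi, ← mul_assoc, hy, zero_mul]
  have hcnzd : ∀ i : ℕ, i ≤ n → (∏ j ∈ Finset.Ioc i n, a j) ∈ nonZeroDivisors R := by
    intro i hi
    rw [mem_nonZeroDivisors_iff_right]
    intro y hy
    refine (mem_nonZeroDivisors_iff_right.mp hfnzd) y ?_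
    rw [← hsplit i hi, mul_comm (∏ j ∈ Finset.Icc 1 i, a j), ← mul_assoc, hy, zero_mul]
  -- I * I = f I
  have hI2 : I * I ≤ Ideal.span {f} * I := by
    refine Ideal.mul_le.mpr fun p hp q hq => ?_
    have h1 : algebraMap R K q ∈ toK R K I := algMap_mem_toK hq
    rw [hprod] at h1
    obtain ⟨z, hzA, hzz⟩ := mem_psmul.mp h1
    have h2 : z * algebraMap R K p ∈ toK R K I := hzA _ (algMap_mem_toK hp)
    obtain ⟨w, hwI, hww⟩ := mem_toK'.mp h2
    have h3 : algebraMap R K (p * q) = algebraMap R K (f * w) := by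
      rw [map_mul, map_mul, hww, ← hzz]
      ring
    rw [inj h3]
    exact Ideal.mul_mem_mul (Ideal.mem_span_singleton_self f) hwI
  -- Nakayama device
  have hNAK : ∀ d : R, d ∈ (⊥ : Ideal R).jacobson → I ≤ Ideal.span {d} * I → False := by
    intro d hd hle
    have h1 : I ≤ (⊥ : Ideal R).jacobson • (I : Submodule R R) := by
      rw [Ideal.smul_eq_mul]
      exact le_trans hle (Ideal.mul_mono_left
        ((Ideal.span_singleton_le_iff_mem _).mpr hd))
    have h2 : I = ⊥ :=
      Submodule.eq_bot_of_le_smul_of_le_jacobson_bot _ _ (IsNoetherian.noetherian I) h1 le_rfl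
    have h3 : d₀ ^ k₁ = 0 := by
      have h4 := hg₀
      rw [h2] at h4
      simpa using h4
    exact one_ne_zero ((mem_nonZeroDivisors_iff_right.mp hg₀nzd) 1 (by rw [one_mul, h3]))
  -- a "unit in A" contradiction device
  have hone : ∀ d : R, d ∈ (⊥ : Ideal R).jacobson →
      (∃ z ∈ A, algebraMap R K d * z = 1) → False := by
    rintro d hd ⟨z, hzA, hz1⟩
    refine hNAK d hd ?_
    intro p hp
    have h1 : z * algebraMap R K p ∈ toK R K I := hzA _ (algMap_mem_toK hp)
    obtain ⟨w, hwI, hww⟩ := mem_toK'.mp h1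
    have h2 : algebraMap R K p = algebraMap R K (d * w) := by
      calc algebraMap R K p = (algebraMap R K d * z) * algebraMap R K p := by
            rw [hz1, one_mul]
        _ = algebraMap R K d * (z * algebraMap R K p) := by ring
        _ = algebraMap R K (d * w) := by rw [map_mul, hww]
    rw [inj h2]
    exact Ideal.mul_mem_mul (Ideal.mem_span_singleton_self d) hwI
  -- factorizations of f with cofactor in I give units in A
  have hmemI_unit : ∀ d d' : R, d * d' = f → d' ∈ nonZeroDivisors R → d' ∈ I →
      ∃ z ∈ A, algebraMap R K d * z = 1 := by
    intro d d' hdd' hd'nzd hd'I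
    have h1 : algebraMap R K d' ∈ toK R K I := algMap_mem_toK hd'I
    rw [hprod] at h1
    obtain ⟨z, hzA, hzz⟩ := mem_psmul.mp h1
    refine ⟨z, hzA, ?_⟩
    have hu : IsUnit (algebraMap R K d') := IsLocalization.map_units K ⟨d', hd'nzd⟩
    apply hu.mul_left_cancel
    rw [mul_one]
    calc algebraMap R K d' * (algebraMap R K d * z)
        = algebraMap R K (d * d') * z := by rw [map_mul]; ring
      _ = algebraMap R K d' := by rw [hdd']; exact hzz
  -- f ∉ m * I
  have hfm : f ∉ maximalIdeal R * I := by
    intro hfin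
    have hIfg : (toK R K I).FG := (IsNoetherian.noetherian I).map _
    have hufA : IsUnit (algebraMap R K f) := IsLocalization.map_units K ⟨f, hfnzd⟩
    have hAfg : A.FG := by
      have hAeq : A = Submodule.map (LinearMap.mulLeft R ((hufA.unit⁻¹ : Kˣ) : K))
          (toK R K I) := by
        apply le_antisymm
        · intro z hz
          refine Submodule.mem_map.mpr ⟨algebraMap R K f * z, ?_, ?_⟩
          · rw [hprod]
            exact mem_psmul.mpr ⟨z, hz, rfl⟩
          · rw [LinearMap.mulLeft_apply, ← mul_assoc, hufA.val_inv_mul, one_mul]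
        · rintro _ ⟨y, hy, rfl⟩
          rw [hprod] at hy
          obtain ⟨z, hzA, hzz⟩ := mem_psmul.mp hy
          rw [LinearMap.mulLeft_apply, ← hzz, ← mul_assoc, hufA.val_inv_mul, one_mul]
          exact hzA
      rw [hAeq]
      exact hIfg.map _
    have h1 : algebraMap R K f ∈ (⊥ : Ideal R).jacobson • toK R K I := by
      have h0 : algebraMap R K f ∈ Submodule.map (Algebra.linearMap R K)
          ((⊥ : Ideal R).jacobson • (I : Submodule R R)) := by
        refine Submodule.mem_map.mpr ⟨f, ?_, rfl⟩
        rw [Ideal.smul_eq_mul, hmmax]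
        exact hfin
      rwa [Submodule.map_smul''] at h0
    rw [hprod] at h1
    have h2 : algebraMap R K f ∈ f • ((⊥ : Ideal R).jacobson • A) := by
      refine Submodule.smul_induction_on h1 ?_ ?_
      · intro r hr y hy
        obtain ⟨z, hzA, hzz⟩ := mem_psmul.mp hy
        refine mem_psmul.mpr ⟨r • z, Submodule.smul_mem_smul hr hzA, ?_⟩
        rw [mul_smul_comm, hzz]
      · intro u v hu hv
        exact Submodule.add_mem _ hu hv
    obtain ⟨u, huA, huu⟩ := mem_psmul.mp h2
    have hu1 : u = 1 := by
      apply hufA.mul_left_cancel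
      rw [mul_one]
      exact huu
    have hAle : A ≤ (⊥ : Ideal R).jacobson • A := by
      intro z hz
      have hz1 : z = z * u := by rw [hu1, mul_one]
      rw [hz1]
      refine Submodule.smul_induction_on huA (fun r hr y hy => ?_) (fun p q hp hq => ?_)
      · rw [mul_smul_comm]
        exact Submodule.smul_mem_smul hr (hAmul z y hz hy)
      · rw [mul_add]
        exact Submodule.add_mem _ hp hq
    have hAbot : A = ⊥ :=
      Submodule.eq_bot_of_le_smul_of_le_jacobson_bot _ _ hAfg hAle le_rfl
    have h1K : (1 : K) = 0 := by
      have := hA1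
      rw [hAbot] at this
      simpa using this
    exact one_ne_zero (inj (by rw [map_one, map_zero, h1K]))
  -- I is not principal generated by f
  have hIf : I ≠ Ideal.span {f} := by
    intro heq
    obtain ⟨y, hy⟩ := Ideal.mem_span_singleton'.mp (heq ▸ ha₀I)
    have hff : f * f ∈ I ^ 2 := by
      rw [pow_two]
      exact Ideal.mul_mem_mul hfI hfI
    rw [ha₀red] at hff
    obtain ⟨d, hdI, hdd⟩ := Ideal.mem_span_singleton_mul.mp hff
    obtain ⟨d', hd'⟩ := Ideal.mem_span_singleton'.mp (heq ▸ hdI)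
    have hstep1 : (y * d' * f) * f = f * f := by
      rw [← hdd, ← hy, ← hd']; ring
    have hstep2 : y * d' * f = f := hcan _ _ hstep1
    have hyu : y * d' = 1 := hcan _ _ (by rw [hstep2, one_mul])
    apply ha₀ne
    apply le_antisymm ((Ideal.span_singleton_le_iff_mem _).mpr ha₀I)
    rw [heq]
    refine (Ideal.span_singleton_le_iff_mem _).mpr ?_
    have : f = d' * a₀ := by
      rw [← hy]
      calc f = (y * d') * f := by rw [hyu, one_mul]
        _ = d' * (y * f) := by ring
    rw [this]
    exact Ideal.mul_mem_left _ _ (Ideal.mem_span_singleton_self a₀)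
  -- the step applications
  have hstep : ∀ i : ℕ, 1 ≤ i → i ≤ n →
      Module.Free (R ⧸ (Ideal.span {∏ j ∈ Finset.Icc 1 i, a j} ⊔ I))
        (Ideal.span {∏ j ∈ Finset.Icc 1 i, a j} ⊔ I).Cotangent
      ∧ Ideal.span {∏ j ∈ Finset.Icc 1 i, a j} ≠ Ideal.span {∏ j ∈ Finset.Icc 1 i, a j} ⊔ I
      ∧ (Ideal.span {∏ j ∈ Finset.Icc 1 i, a j} ⊔ I) ^ 2
          = Ideal.span {∏ j ∈ Finset.Icc 1 i, a j} * (Ideal.span {∏ j ∈ Finset.Icc 1 i, a j} ⊔ I) := by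
    intro i h1 h2
    have hcI : (∏ j ∈ Finset.Ioc i n, a j) ∉ I := by
      intro hcin
      exact hone _ (hbm i h1 h2)
        (hmemI_unit _ _ (hsplit i h2) (hcnzd i h2) hcin)
    exact ulrich_step I _ _ f (hsplit i h2).symm hfI hI2 hfm hfree hcI hIf
  have hradJ : ∀ i : ℕ, 1 ≤ i → i ≤ n →
      (Ideal.span {∏ j ∈ Finset.Icc 1 i, a j} ⊔ I).radical = (⊥ : Ideal R).jacobson := by
    intro i h1 h2
    apply le_antisymm
    · have hJm : Ideal.span {∏ j ∈ Finset.Icc 1 i, a j} ⊔ I ≤ maximalIdeal R := by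
        refine sup_le ((Ideal.span_singleton_le_iff_mem _).mpr ?_) ?_
        · rw [← hmmax]; exact hbm i h1 h2
        · calc I ≤ I.radical := Ideal.le_radical
            _ = (⊥ : Ideal R).jacobson := hrad
            _ = maximalIdeal R := hmmax
      rw [hmmax]
      calc (Ideal.span {∏ j ∈ Finset.Icc 1 i, a j} ⊔ I).radical
          ≤ (maximalIdeal R).radical := Ideal.radical_mono hJm
        _ = maximalIdeal R :=
            ((maximalIdeal.isMaximal R).isPrime).radical
    · rw [← hrad]
      exact Ideal.radical_mono le_sup_right
  have hmain : ∀ i : ℕ, 1 ≤ i → i ≤ n →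
      IsUlrich R (Ideal.span {∏ j ∈ Finset.Icc 1 i, a j} ⊔ I) := by
    intro i h1 h2
    obtain ⟨hfreeJ, hneJ, hsqJ⟩ := hstep i h1 h2
    refine ⟨hradJ i h1 h2, ?_, ∏ j ∈ Finset.Icc 1 i, a j,
      Ideal.mem_sup_left (Ideal.mem_span_singleton_self _), hneJ, hsqJ, hfreeJ⟩
    intro htop
    apply (maximalIdeal.isMaximal R).ne_top
    rw [eq_top_iff, ← htop]
    refine sup_le ((Ideal.span_singleton_le_iff_mem _).mpr ?_) ?_
    · rw [← hmmax]; exact hbm i h1 h2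
    · calc I ≤ I.radical := Ideal.le_radical
        _ = (⊥ : Ideal R).jacobson := hrad
        _ = maximalIdeal R := hmmax
  refine ⟨hmain, ?_, ?_⟩
  · exact sup_eq_right.mpr ((Ideal.span_singleton_le_iff_mem _).mpr hfI)
  · intro i h1 h2
    have hsucc : (∏ j ∈ Finset.Icc 1 (i + 1), a j)
        = (∏ j ∈ Finset.Icc 1 i, a j) * a (i + 1) := by
      rw [hIcc, hIcc]
      exact Finset.prod_Ioc_succ_top (Nat.zero_le i) _
    have hle : (Ideal.span {∏ j ∈ Finset.Icc 1 (i + 1), a j} ⊔ I)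
        ≤ (Ideal.span {∏ j ∈ Finset.Icc 1 i, a j} ⊔ I) := by
      refine sup_le (le_trans ?_ le_sup_left) le_sup_right
      rw [hsucc]
      refine (Ideal.span_singleton_le_iff_mem _).mpr ?_
      exact Ideal.mul_mem_right _ _ (Ideal.mem_span_singleton_self _)
    refine lt_of_le_of_ne hle ?_
    intro heq
    -- then b i ∈ J (i+1), so b i ∈ I after a unit manipulation
    have hbmem : (∏ j ∈ Finset.Icc 1 i, a j)
        ∈ Ideal.span {∏ j ∈ Finset.Icc 1 (i + 1), a j} ⊔ I := by
      rw [heq]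
      exact Ideal.mem_sup_left (Ideal.mem_span_singleton_self _)
    obtain ⟨r, z, hzI, hrz⟩ := Ideal.mem_span_singleton_sup.mp hbmem
    -- (∏ Icc 1 i) * (1 - r * a (i+1)) = z ∈ I
    have hzeq : (∏ j ∈ Finset.Icc 1 i, a j) * (1 - r * a (i + 1)) = z := by
      linear_combination -hrz + r * hsucc
    have hunit : IsUnit (1 - r * a (i + 1)) := by
      by_contra hnu
      have h3 : (1 : R) ∈ maximalIdeal R := by
        have h4 : (1 - r * a (i + 1)) ∈ maximalIdeal R :=
          (IsLocalRing.mem_maximalIdeal _).mpr hnu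
        have h5 : r * a (i + 1) ∈ maximalIdeal R := by
          refine Ideal.mul_mem_left _ _ ?_
          rw [← hmmax]
          exact ha (i + 1) (Nat.le_add_left 1 i) h2
        have := Ideal.add_mem _ h4 h5
        simpa using this
      exact (maximalIdeal.isMaximal R).ne_top (Ideal.eq_top_iff_one _ |>.mpr h3)
    have hbI : (∏ j ∈ Finset.Icc 1 i, a j) ∈ I := by
      have h6 : (∏ j ∈ Finset.Icc 1 i, a j) * (1 - r * a (i + 1)) ∈ I := by
        rw [hzeq]; exact hzI
      have h7 := I.mul_mem_left (↑hunit.unit⁻¹ : R) h6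
      rwa [← mul_assoc, mul_comm (↑hunit.unit⁻¹ : R), mul_assoc, hunit.val_inv_mul,
        mul_one] at h7
    -- contradiction via Nakayama
    exact hone _ (hcm i h2)
      (hmemI_unit _ _ (by rw [mul_comm]; exact hsplit i (le_of_lt h2)) (hbnzd i (le_of_lt h2)) hbI)
end
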